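/- arXiv:2412.05144 — 6 statements merged into one kernel-verified Lean document; each statement's English description precedes it below -/
import Mathlib

section
/- Let 1 ≤ p ≤ n and let Q ∈ ℝ^{n×p} have orthonormal columns. Then there exists a subset I ⊆ {1, …, n} with |I| = p such that the p×p submatrix Q_I of Q formed by the rows indexed by I satisfies σ_min(Q_I) ≥ 1/√(p(n−p) + min(p, n−p)), where σ_min denotes the smallest singular value. -/
open Matrix


lemma rows_span (n p : ℕ) (Q : Matrix (Fin n) (Fin p) ℝ) (hQ : Qᵀ * Q = 1)
    (v : Fin p → ℝ) : v ∈ Submodule.span ℝ (Set.range fun i => Q i) := by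
  have hv : v = ∑ i, (Q *ᵥ v) i • Q i := by
    have h1 : Qᵀ *ᵥ (Q *ᵥ v) = v := by
      rw [Matrix.mulVec_mulVec, hQ, Matrix.one_mulVec]
    funext j
    conv_lhs => rw [← h1]
    simp [Matrix.mulVec, dotProduct, Matrix.transpose_apply,
      Finset.sum_apply, mul_comm]
  rw [hv]
  exact Submodule.sum_mem _ fun i _ => Submodule.smul_mem _ _
    (Submodule.subset_span (Set.mem_range_self i))

lemma exists_nonsing_submatrix (n p : ℕ) (hpn : p ≤ n)
    (Q : Matrix (Fin n) (Fin p) ℝ) (hQ : Qᵀ * Q = 1) :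
    ∃ e : Fin p → Fin n, Function.Injective e ∧ IsUnit (Q.submatrix e id) := by
  obtain ⟨b, hbsub, hbspan, hbli⟩ := exists_linearIndependent ℝ (Set.range fun i : Fin n => Q i)
  have hbfin : b.Finite := (Set.finite_range _).subset hbsub
  have := hbfin.fintype
  have hspan_top : Submodule.span ℝ b = ⊤ := by
    rw [hbspan]
    exact top_unique fun v _ => rows_span n p Q hQ v
  let B : Module.Basis b ℝ (Fin p → ℝ) := Module.Basis.mk hbli (by rw [Subtype.range_coe, hspan_top])
  have hcard : Fintype.card b = p := by
    rw [← Module.finrank_eq_card_basis B]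
    simp
  let g : Fin p ≃ b := (Fintype.equivFinOfCardEq hcard).symm
  have hpre : ∀ k : Fin p, ∃ i : Fin n, Q i = (g k : Fin p → ℝ) := fun k => hbsub (g k).2
  choose e he using hpre
  refine ⟨e, ?_, ?_⟩
  · intro a b' hab
    have : (g a : Fin p → ℝ) = (g b' : Fin p → ℝ) := by rw [← he a, ← he b', hab]
    exact g.injective (Subtype.ext this)
  · rw [← Matrix.linearIndependent_rows_iff_isUnit]
    have : (Q.submatrix e id).row = fun k => (g k : Fin p → ℝ) := by
      funext k
      rw [← he k]
      rfl
    rw [this]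
    exact hbli.comp (fun k => g k) (fun a b' hab => g.injective hab)

lemma exists_compl_enum (n p : ℕ) (e : Fin p → Fin n) (he : Function.Injective e) :
    ∃ f : Fin (n-p) → Fin n, Function.Injective f ∧ (∀ l, f l ∉ Set.range e) ∧
      ∀ g : Fin n → ℝ, ∑ i, g i = ∑ k, g (e k) + ∑ l, g (f l) := by
  classical
  set s : Finset (Fin n) := (Finset.image e Finset.univ)ᶜ with hs
  have hcard : s.card = n - p := by
    rw [hs, Finset.card_compl, Finset.card_image_of_injective _ he]
    simp
  let E : Fin (n - p) ≃ s := (finCongr hcard.symm).trans s.equivFin.symm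
  refine ⟨fun l => (E l : Fin n), ?_, ?_, ?_⟩
  · intro a b hab
    exact E.injective (Subtype.ext hab)
  · intro l
    have hmem : (E l : Fin n) ∈ s := (E l).2
    simp only [hs, Finset.mem_compl, Finset.mem_image] at hmem
    rintro ⟨k, hk⟩
    exact hmem ⟨k, Finset.mem_univ k, hk⟩
  · intro g
    have h1 : ∑ i ∈ Finset.image e Finset.univ, g i + ∑ i ∈ s, g i = ∑ i, g i :=
      Finset.sum_add_sum_compl _ _
    have h2 : ∑ i ∈ Finset.image e Finset.univ, g i = ∑ k, g (e k) :=
      Finset.sum_image (fun x _ y _ h => he h)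
    have h3 : ∑ i ∈ s, g i = ∑ l, g ((E l : Fin n)) := by
      rw [← Finset.sum_coe_sort s g]
      exact (Fintype.sum_equiv E (fun l => g (E l : Fin n)) (fun y => g (y : Fin n))
        (fun l => rfl)).symm
    rw [← h1, h2, h3]

lemma key_lemma (n p : ℕ) (hpn : p ≤ n) (Q : Matrix (Fin n) (Fin p) ℝ) (hQ : Qᵀ * Q = 1)
    (exists_nonsing : ∃ e : Fin p → Fin n, Function.Injective e ∧ IsUnit (Q.submatrix e id))
    (compl_enum : ∀ e : Fin p → Fin n, Function.Injective e →
      ∃ f : Fin (n-p) → Fin n, Function.Injective f ∧ (∀ l, f l ∉ Set.range e) ∧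
        ∀ g : Fin n → ℝ, ∑ i, g i = ∑ k, g (e k) + ∑ l, g (f l)) :
    ∃ e : Fin p → Fin n, Function.Injective e ∧
      ∀ x : Fin p → ℝ, ∑ j, x j ^ 2 = 1 →
        1 / ((p : ℝ) * ((n - p : ℕ) : ℝ) + 1) ≤ ∑ k, ((Q.submatrix e id) *ᵥ x) k ^ 2 := by
  classical
  obtain ⟨e0, he0, hU0⟩ := exists_nonsing
  obtain ⟨e, heF, hmax⟩ := Finset.exists_max_image
    (Finset.univ.filter fun e : Fin p → Fin n => Function.Injective e)
    (fun e => |(Q.submatrix e id).det|)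
    ⟨e0, by simp [he0]⟩
  have he : Function.Injective e := by simpa using heF
  set A : Matrix (Fin p) (Fin p) ℝ := Q.submatrix e id with hA
  have hdet0 : (Q.submatrix e0 id).det ≠ 0 :=
    ((Matrix.isUnit_iff_isUnit_det _).mp hU0).ne_zero
  have hdet_pos : 0 < |A.det| := by
    have h := hmax e0 (by simp [he0])
    have : 0 < |(Q.submatrix e0 id).det| := abs_pos.mpr hdet0
    linarith
  have hAU : IsUnit A.det := isUnit_iff_ne_zero.mpr (fun h => by simp [h] at hdet_pos)
  obtain ⟨f, hf, hfe, hsum⟩ := compl_enum e he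
  refine ⟨e, he, ?_⟩
  intro x hx
  set u : Fin p → ℝ := A *ᵥ x with hu
  set S : ℝ := ∑ k, u k ^ 2 with hS
  have hS0 : 0 ≤ S := Finset.sum_nonneg fun k _ => sq_nonneg _
  -- total sum is 1
  have h1 : ∑ i, (Q *ᵥ x) i ^ 2 = 1 := by
    have hdp : (Q *ᵥ x) ⬝ᵥ (Q *ᵥ x) = x ⬝ᵥ x := by
      rw [Matrix.dotProduct_mulVec, ← Matrix.vecMul_transpose, Matrix.vecMul_vecMul, hQ,
        Matrix.vecMul_one]
    have hxx : x ⬝ᵥ x = 1 := by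
      rw [← hx]; simp [dotProduct, pow_two]
    rw [← hxx, ← hdp]
    simp [dotProduct, pow_two]
  -- each complement row contributes at most p * S
  have hbound : ∀ l, (Q *ᵥ x) (f l) ^ 2 ≤ (p : ℝ) * S := by
    intro l
    set c : Fin p → ℝ := (fun j => Q (f l) j) ᵥ* A⁻¹ with hc
    have hcA : c ᵥ* A = fun j => Q (f l) j := by
      rw [hc, Matrix.vecMul_vecMul, Matrix.nonsing_inv_mul A hAU, Matrix.vecMul_one]
    have hrow : (fun j => Q (f l) j) = ∑ m, c m • A m := by
      rw [← hcA]
      funext j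
      simp [Matrix.vecMul, dotProduct, Finset.sum_apply]
    have hck : ∀ k, |c k| ≤ 1 := by
      intro k
      have hdet' : (A.updateRow k (fun j => Q (f l) j)).det = c k * A.det := by
        rw [hrow, Matrix.det_updateRow_sum]
        exact smul_eq_mul _ _
      have hinj' : Function.Injective (Function.update e k (f l)) := by
        intro a b hab
        by_cases ha : a = k <;> by_cases hb : b = k
        · rw [ha, hb]
        · rw [Function.update_apply, Function.update_apply, if_pos ha, if_neg hb] at hab
          exact absurd ⟨b, hab.symm⟩ (hfe l)
        · rw [Function.update_apply, Function.update_apply, if_neg ha, if_pos hb] at hab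
          exact absurd ⟨a, hab⟩ (hfe l)
        · rw [Function.update_apply, Function.update_apply, if_neg ha, if_neg hb] at hab
          exact he hab
      have hsub : A.updateRow k (fun j => Q (f l) j) =
          Q.submatrix (Function.update e k (f l)) id := by
        ext m j
        rcases eq_or_ne m k with h | h
        · rw [h]
          simp [Matrix.updateRow_self, Matrix.submatrix_apply]
        · simp [Matrix.updateRow_ne h, Matrix.submatrix_apply, Function.update_apply, h, hA]
      have hle : |(Q.submatrix (Function.update e k (f l)) id).det| ≤ |A.det| :=
        hmax _ (by simp [hinj'])
      rw [← hsub, hdet', abs_mul] at hle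
      exact le_of_mul_le_mul_right (by linarith) hdet_pos
    have hval : (Q *ᵥ x) (f l) = ∑ k, c k * u k := by
      have : (Q *ᵥ x) (f l) = (c ᵥ* A) ⬝ᵥ x := by
        rw [hcA]; rfl
      rw [this, ← Matrix.dotProduct_mulVec, ← hu]
      rfl
    rw [hval]
    calc (∑ k, c k * u k) ^ 2 ≤ (∑ k, c k ^ 2) * ∑ k, u k ^ 2 :=
          Finset.sum_mul_sq_le_sq_mul_sq _ _ _
      _ ≤ (p : ℝ) * S := by
          apply mul_le_mul_of_nonneg_right ?_ hS0
          calc ∑ k, c k ^ 2 ≤ ∑ _k : Fin p, (1 : ℝ) := by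
                apply Finset.sum_le_sum
                intro k _
                calc c k ^ 2 = |c k| ^ 2 := (sq_abs _).symm
                  _ ≤ 1 ^ 2 := pow_le_pow_left₀ (abs_nonneg _) (hck k) 2
                  _ = 1 := one_pow 2
            _ = (p : ℝ) := by simp
  -- combine
  have hsplit : (1 : ℝ) = S + ∑ l, (Q *ᵥ x) (f l) ^ 2 := by
    have hek : ∀ k, (Q *ᵥ x) (e k) = u k := by
      intro k
      simp [hu, hA, Matrix.mulVec, dotProduct, Matrix.submatrix_apply]
    rw [← h1, hsum (fun i => (Q *ᵥ x) i ^ 2), hS]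
    congr 1
  have htot : (1 : ℝ) ≤ S + ((n - p : ℕ) : ℝ) * ((p : ℝ) * S) := by
    rw [hsplit]
    have : ∑ l, (Q *ᵥ x) (f l) ^ 2 ≤ ((n - p : ℕ) : ℝ) * ((p : ℝ) * S) := by
      calc ∑ l, (Q *ᵥ x) (f l) ^ 2 ≤ ∑ _l : Fin (n - p), (p : ℝ) * S :=
            Finset.sum_le_sum fun l _ => hbound l
        _ = ((n - p : ℕ) : ℝ) * ((p : ℝ) * S) := by simp [mul_assoc]
    linarith
  rw [div_le_iff₀ (by positivity)]
  nlinarith [htot]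

/-- Hong–Pan rank-revealing lemma.  Let `1 ≤ p ≤ n` and let
`Q ∈ ℝ^{n×p}` have orthonormal columns (`Qᵀ Q = I`).  Then there is a set of `p` rows
(an injection `e : Fin p → Fin n`) such that the corresponding `p × p` submatrix `Q_I`
satisfies `σ_min(Q_I) ≥ 1/√(p(n−p) + min(p, n−p))`, where
`σ_min(A) = min_{‖x‖=1} ‖A x‖`. -/
theorem exists_rows_submatrix_sigma_min_ge
    (n p : ℕ) (hp : 1 ≤ p) (hpn : p ≤ n)
    (Q : Matrix (Fin n) (Fin p) ℝ) (hQ : Qᵀ * Q = 1) :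
    ∃ e : Fin p → Fin n, Function.Injective e ∧
      ∀ x : EuclideanSpace ℝ (Fin p), ‖x‖ = 1 →
        ‖Matrix.toEuclideanLin (Q.submatrix e id) x‖ ≥
          1 / Real.sqrt ((p : ℝ) * ((n : ℝ) - p) + (min p (n - p) : ℕ)) := by
  by_cases hpe : p = n
  · refine ⟨Fin.castLE hpn, Fin.castLE_injective hpn, fun x _ => ?_⟩
    have hz : ((p : ℝ) * ((n : ℝ) - p) + (min p (n - p) : ℕ)) = 0 := by
      subst hpe; simp
    rw [hz, Real.sqrt_zero, div_zero]
    exact norm_nonneg _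
  · have hplt : p < n := lt_of_le_of_ne hpn hpe
    obtain ⟨e, he, hkey⟩ := key_lemma n p hpn Q hQ
      (exists_nonsing_submatrix n p hpn Q hQ)
      (fun e he => exists_compl_enum n p e he)
    refine ⟨e, he, fun x hx => ?_⟩
    have hx2 : ∑ j, x j ^ 2 = 1 := by
      have h := EuclideanSpace.norm_eq x
      rw [hx] at h
      have h2 := Real.sqrt_eq_one.mp h.symm
      simpa [Real.norm_eq_abs, sq_abs] using h2
    have hnorm : ‖Matrix.toEuclideanLin (Q.submatrix e id) x‖ =
        Real.sqrt (∑ k, ((Q.submatrix e id) *ᵥ (fun j => x j)) k ^ 2) := by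
      rw [EuclideanSpace.norm_eq]
      congr 1
      refine Finset.sum_congr rfl fun k _ => ?_
      simp only [Matrix.toEuclideanLin_apply, Real.norm_eq_abs, sq_abs]
    set D : ℝ := (p : ℝ) * ((n - p : ℕ) : ℝ) + 1 with hD
    have hDpos : (0 : ℝ) < D := by positivity
    have hcast : ((n - p : ℕ) : ℝ) = (n : ℝ) - p := by
      exact Nat.cast_sub hpn
    have hmin : (1 : ℝ) ≤ ((min p (n - p) : ℕ) : ℝ) := by
      have : 1 ≤ min p (n - p) := le_min hp (by omega)
      exact_mod_cast this
    have hDT : D ≤ (p : ℝ) * ((n : ℝ) - p) + (min p (n - p) : ℕ) := by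
      rw [hD, hcast]
      linarith
    rw [ge_iff_le, hnorm]
    calc 1 / Real.sqrt ((p : ℝ) * ((n : ℝ) - p) + (min p (n - p) : ℕ))
        ≤ 1 / Real.sqrt D :=
          one_div_le_one_div_of_le (Real.sqrt_pos.mpr hDpos) (Real.sqrt_le_sqrt hDT)
      _ = Real.sqrt (1 / D) := by
          rw [one_div, one_div, ← Real.sqrt_inv]
      _ ≤ Real.sqrt (∑ k, ((Q.submatrix e id) *ᵥ (fun j => x j)) k ^ 2) :=
          Real.sqrt_le_sqrt (hkey (fun j => x j) hx2)
end

section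
/- Let Q ∈ ℝ^{n×n} be orthogonal and 1 ≤ p < n. Then there exists a permutation matrix P ∈ ℝ^{n×n} such that, writing PQ in block form with V₂₂ ∈ ℝ^{(n−p)×(n−p)} the bottom-right block (rows p+1, …, n and columns p+1, …, n of PQ), the block V₂₂ is invertible and its inverse satisfies ‖V₂₂^{-1}‖² ≤ (p+1)(n−p), where ‖·‖ denotes the spectral (operator) norm. -/
set_option maxHeartbeats 1000000
open Matrix

section AuxLemmas

variable {k m : ℕ}

lemma dot_self_nonneg (v : Fin k → ℝ) : 0 ≤ v ⬝ᵥ v :=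
  Finset.sum_nonneg fun i _ => mul_self_nonneg _

lemma dot_cs (a b : Fin k → ℝ) : (a ⬝ᵥ b) ^ 2 ≤ (a ⬝ᵥ a) * (b ⬝ᵥ b) := by
  have h := Finset.sum_mul_sq_le_sq_mul_sq Finset.univ a b
  simpa [dotProduct, sq] using h

/-- vecMul bound implies mulVec bound (σ(Mᵀ) ≤ σ(M) in squared form). -/
lemma aux_transfer (M : Matrix (Fin k) (Fin m) ℝ) {a b : ℝ} (ha : 0 < a) (hb : 0 ≤ b)
    (h : ∀ u : Fin k → ℝ, a * ((u ᵥ* M) ⬝ᵥ (u ᵥ* M)) ≤ b * (u ⬝ᵥ u)) :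
    ∀ x : Fin m → ℝ, a * ((M *ᵥ x) ⬝ᵥ (M *ᵥ x)) ≤ b * (x ⬝ᵥ x) := by
  intro x
  set y := M *ᵥ x with hy
  have hyy : y ⬝ᵥ y = (y ᵥ* M) ⬝ᵥ x := Matrix.dotProduct_mulVec y M x
  have hcs : ((y ᵥ* M) ⬝ᵥ x) ^ 2 ≤ ((y ᵥ* M) ⬝ᵥ (y ᵥ* M)) * (x ⬝ᵥ x) := dot_cs _ _
  have h1 := h y
  have nx := dot_self_nonneg x
  have ny := dot_self_nonneg y
  by_cases hz : y ⬝ᵥ y = 0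
  · rw [hz]; exact le_trans (by simp) (mul_nonneg hb nx)
  · have hpos : 0 < y ⬝ᵥ y := lt_of_le_of_ne ny (Ne.symm hz)
    have h2 : a * (y ⬝ᵥ y) ^ 2 ≤ b * (x ⬝ᵥ x) * (y ⬝ᵥ y) := by
      calc a * (y ⬝ᵥ y) ^ 2 = a * ((y ᵥ* M) ⬝ᵥ x) ^ 2 := by rw [hyy]
        _ ≤ a * (((y ᵥ* M) ⬝ᵥ (y ᵥ* M)) * (x ⬝ᵥ x)) :=
            mul_le_mul_of_nonneg_left hcs ha.le
        _ = (a * ((y ᵥ* M) ⬝ᵥ (y ᵥ* M))) * (x ⬝ᵥ x) := by ring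
        _ ≤ (b * (y ⬝ᵥ y)) * (x ⬝ᵥ x) := mul_le_mul_of_nonneg_right h1 nx
        _ = b * (x ⬝ᵥ x) * (y ⬝ᵥ y) := by ring
    have h3 : a * (y ⬝ᵥ y) * (y ⬝ᵥ y) ≤ (b * (x ⬝ᵥ x)) * (y ⬝ᵥ y) := by
      calc a * (y ⬝ᵥ y) * (y ⬝ᵥ y) = a * (y ⬝ᵥ y) ^ 2 := by ring
        _ ≤ b * (x ⬝ᵥ x) * (y ⬝ᵥ y) := h2
    exact le_of_mul_le_mul_right h3 hpos

/-- mulVec bound implies vecMul bound. -/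
lemma aux_transfer' (M : Matrix (Fin k) (Fin m) ℝ) {a b : ℝ} (ha : 0 < a) (hb : 0 ≤ b)
    (h : ∀ u : Fin m → ℝ, a * ((M *ᵥ u) ⬝ᵥ (M *ᵥ u)) ≤ b * (u ⬝ᵥ u)) :
    ∀ x : Fin k → ℝ, a * ((x ᵥ* M) ⬝ᵥ (x ᵥ* M)) ≤ b * (x ⬝ᵥ x) := by
  intro x
  have h' : ∀ u : Fin m → ℝ, a * ((u ᵥ* Mᵀ) ⬝ᵥ (u ᵥ* Mᵀ)) ≤ b * (u ⬝ᵥ u) := by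
    intro u; simpa [Matrix.vecMul_transpose] using h u
  have := aux_transfer Mᵀ ha hb h' x
  simpa [Matrix.mulVec_transpose] using this

lemma dot_mulVec_self {A : Matrix (Fin k) (Fin m) ℝ} (hA : Aᵀ * A = 1) (u : Fin m → ℝ) :
    (A *ᵥ u) ⬝ᵥ (A *ᵥ u) = u ⬝ᵥ u := by
  have h1 : (A *ᵥ u) ⬝ᵥ (A *ᵥ u) = ((A *ᵥ u) ᵥ* A) ⬝ᵥ u := Matrix.dotProduct_mulVec _ A u
  have h2 : (A *ᵥ u) ᵥ* A = Aᵀ *ᵥ (A *ᵥ u) := (Matrix.mulVec_transpose A _).symm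
  rw [h1, h2, Matrix.mulVec_mulVec, hA, Matrix.one_mulVec]

lemma sum_split {n p : ℕ} (hpn : p ≤ n) (f : Fin n → ℝ) :
    ∑ i, f i = (∑ k : Fin p, f ⟨k.1, by omega⟩) + ∑ k : Fin (n - p), f ⟨p + k.1, by omega⟩ := by
  have h : p + (n - p) = n := by omega
  rw [← Equiv.sum_comp (finCongr h) f, Fin.sum_univ_add]
  congr 1 <;> refine Finset.sum_congr rfl fun i _ => ?_ <;> congr 1 <;> exact Fin.ext (by simp)

end AuxLemmas
open Matrix

def emb1 {n p : ℕ} (h : p ≤ n) : Fin p → Fin n := fun k => ⟨k.1, by have := k.2; omega⟩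
def emb2 (n p : ℕ) : Fin (n - p) → Fin n := fun k => ⟨p + k.1, by have := k.2; omega⟩

lemma emb1_inj {n p : ℕ} (h : p ≤ n) : Function.Injective (emb1 h) := by
  intro a b hab
  have h2 := congrArg Fin.val hab
  exact Fin.ext h2

lemma emb2_inj (n p : ℕ) : Function.Injective (emb2 n p) := by
  intro a b hab
  have h2 := congrArg Fin.val hab
  simp only [emb2] at h2
  exact Fin.ext (by omega)

lemma gram_col {n : ℕ} {Q : Matrix (Fin n) (Fin n) ℝ} (hQ : Qᵀ * Q = 1)
    (σ : Equiv.Perm (Fin n)) (i j : Fin n) :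
    (∑ l, Q (σ l) i * Q (σ l) j) = if i = j then 1 else 0 := by
  have h1 : ∑ l, Q (σ l) i * Q (σ l) j = ∑ l, Q l i * Q l j :=
    Equiv.sum_comp σ (fun l => Q l i * Q l j)
  have h2 : (Qᵀ * Q) i j = ∑ l, Q l i * Q l j := by
    simp [Matrix.mul_apply, Matrix.transpose_apply]
  rw [h1, ← h2, hQ, Matrix.one_apply]

lemma gram_row {n : ℕ} {Q : Matrix (Fin n) (Fin n) ℝ} (hQ' : Q * Qᵀ = 1) (i j : Fin n) :
    (∑ l, Q i l * Q j l) = if i = j then 1 else 0 := by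
  have h2 : (Q * Qᵀ) i j = ∑ l, Q i l * Q j l := by
    simp [Matrix.mul_apply, Matrix.transpose_apply]
  rw [← h2, hQ', Matrix.one_apply]

lemma subTtS {n a : ℕ} {Q : Matrix (Fin n) (Fin n) ℝ} (hQ : Qᵀ * Q = 1)
    (σ : Equiv.Perm (Fin n)) (f : Fin a → Fin n) (hf : Function.Injective f) :
    (Q.submatrix (fun i => σ i) f)ᵀ * (Q.submatrix (fun i => σ i) f) = 1 := by
  ext i j
  simp only [Matrix.mul_apply, Matrix.transpose_apply, Matrix.submatrix_apply]
  rw [gram_col hQ σ (f i) (f j)]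
  simp [Matrix.one_apply, hf.eq_iff]

lemma subStT {n a : ℕ} {Q : Matrix (Fin n) (Fin n) ℝ} (hQ' : Q * Qᵀ = 1)
    (g : Fin a → Fin n) (hg : Function.Injective g) :
    (Q.submatrix g id) * (Q.submatrix g id)ᵀ = 1 := by
  ext i j
  simp only [Matrix.mul_apply, Matrix.transpose_apply, Matrix.submatrix_apply, id]
  rw [gram_row hQ' (g i) (g j)]
  simp [Matrix.one_apply, hg.eq_iff]

lemma exists_perm_submatrix_det_ne_zero {n p : ℕ} (hpn : p ≤ n)
    (Q : Matrix (Fin n) (Fin n) ℝ) (hQ : Qᵀ * Q = 1) :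
    ∃ σ : Equiv.Perm (Fin n),
      (Q.submatrix (fun k => σ (emb1 hpn k)) (emb1 hpn)).det ≠ 0 := by
  classical
  set e1 : Fin p → Fin n := emb1 hpn with he1def
  set B : Matrix (Fin n) (Fin p) ℝ := Q.submatrix (fun i => i) e1 with hBdef
  have hBtB : Bᵀ * B = 1 := by
    have := subTtS hQ (Equiv.refl _) e1 (emb1_inj hpn)
    rw [hBdef]; simpa using this
  have hsurj : Function.Surjective B.vecMulLinear := by
    intro u
    refine ⟨u ᵥ* Bᵀ, ?_⟩
    rw [Matrix.vecMulLinear_apply, Matrix.vecMul_vecMul, hBtB, Matrix.vecMul_one]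
  have hspan : Submodule.span ℝ (Set.range B) = ⊤ := by
    rw [show Set.range B = Set.range B.row from rfl, ← range_vecMulLinear]; exact LinearMap.range_eq_top.mpr hsurj
  obtain ⟨b, hb_sub, hb_span, hb_li⟩ := exists_linearIndependent ℝ (Set.range B)
  have hbfin : b.Finite := Set.Finite.subset (Set.finite_range B) hb_sub
  haveI : Fintype b := hbfin.fintype
  let basisB : Module.Basis b ℝ (Fin p → ℝ) :=
    Module.Basis.mk hb_li (by rw [Subtype.range_coe, hb_span, hspan])
  have hcard : Fintype.card b = p := by
    have h1 := Module.finrank_eq_card_basis basisB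
    rw [Module.finrank_fin_fun] at h1
    omega
  let eqv : Fin p ≃ b := (Fintype.equivFinOfCardEq hcard).symm
  choose idx hidx using fun (v : b) => (hb_sub v.2 : (v : Fin p → ℝ) ∈ Set.range B)
  set g : Fin p → Fin n := fun k => idx (eqv k) with hgdef
  have hrows : ∀ k, B (g k) = ((eqv k : b) : Fin p → ℝ) := fun k => hidx (eqv k)
  have hli2 : LinearIndependent ℝ (fun k : Fin p => B (g k)) := by
    have heq : (fun k : Fin p => B (g k)) = (Subtype.val : b → (Fin p → ℝ)) ∘ eqv :=
      funext fun k => hrows k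
    rw [heq]
    exact hb_li.comp eqv eqv.injective
  have hginj : Function.Injective g := by
    intro a a' hgg
    have h1 : ((eqv a : b) : Fin p → ℝ) = ((eqv a' : b) : Fin p → ℝ) := by
      rw [← hrows a, ← hrows a', hgg]
    exact eqv.injective (Subtype.ext h1)
  have hdet : (Q.submatrix g e1).det ≠ 0 := by
    intro hdet0
    obtain ⟨v, hv0, hv⟩ := Matrix.exists_vecMul_eq_zero_iff.mpr hdet0
    have hsum : ∑ k, v k • (fun j => B (g j)) k = 0 := by
      funext j
      have h1 := congrFun hv j
      simp only [Matrix.vecMul, dotProduct] at h1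
      simpa [Finset.sum_apply, Matrix.submatrix_apply, hBdef] using h1
    have hall := Fintype.linearIndependent_iff.mp hli2 v hsum
    exact hv0 (funext hall)
  -- extend g to a permutation
  let ea : {x : Fin n // x.1 < p} ≃ Fin p :=
    { toFun := fun x => ⟨x.1.1, x.2⟩
      invFun := fun k => ⟨e1 k, k.2⟩
      left_inv := fun x => Subtype.ext (Fin.ext rfl)
      right_inv := fun k => Fin.ext rfl }
  let eb : Fin p ≃ {x : Fin n // x ∈ Set.range g} := Equiv.ofInjective g hginj
  let e : {x : Fin n // x.1 < p} ≃ {x : Fin n // x ∈ Set.range g} := ea.trans eb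
  refine ⟨e.extendSubtype, ?_⟩
  have hcomp : ∀ k : Fin p, e.extendSubtype (e1 k) = g k := by
    intro k
    rw [Equiv.extendSubtype_apply_of_mem e (e1 k) (show (e1 k).1 < p from k.2)]
    have h1 : ea ⟨e1 k, k.2⟩ = k := Fin.ext rfl
    show ((eb (ea ⟨e1 k, k.2⟩)) : Fin n) = g k
    rw [h1]
    rfl
  have : (fun k => e.extendSubtype (e1 k)) = g := funext hcomp
  rw [this]
  exact hdet
open Matrix

/-- Let `Q ∈ ℝ^{n×n}` be orthogonal and `1 ≤ p < n`.  Then there is a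
permutation of the rows (a permutation matrix `P`, encoded by `σ : Equiv.Perm (Fin n)`
with `PQ = Q.submatrix σ id`) such that the bottom-right `(n−p) × (n−p)` block `V₂₂` of
`PQ` is invertible with `‖V₂₂⁻¹‖² ≤ (p+1)(n−p)` in the spectral norm. -/
theorem exists_permutation_bottom_block_inverse_bound
    (n p : ℕ) (hp : 1 ≤ p) (hpn : p < n)
    (Q : Matrix (Fin n) (Fin n) ℝ) (hQ : Qᵀ * Q = 1) :
    ∃ σ : Equiv.Perm (Fin n),
      ∀ V₂₂ : Matrix (Fin (n - p)) (Fin (n - p)) ℝ,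
        V₂₂ = (Q.submatrix σ id).submatrix
            (fun i : Fin (n - p) => (⟨p + i.1, by omega⟩ : Fin n))
            (fun j : Fin (n - p) => (⟨p + j.1, by omega⟩ : Fin n)) →
        IsUnit V₂₂ ∧
          ‖Matrix.toEuclideanCLM (𝕜 := ℝ) V₂₂⁻¹‖ ^ 2 ≤ ((p : ℝ) + 1) * ((n : ℝ) - p) := by
  classical
  have hpn' : p ≤ n := hpn.le
  set e1 : Fin p → Fin n := emb1 hpn' with he1def
  set e2 : Fin (n - p) → Fin n := emb2 n p with he2def
  obtain ⟨σ₀, -, hmax⟩ := Finset.exists_max_image (Finset.univ : Finset (Equiv.Perm (Fin n)))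
      (fun σ => |(Q.submatrix (fun k => σ (e1 k)) e1).det|) ⟨1, Finset.mem_univ 1⟩
  obtain ⟨σ₁, hσ₁⟩ := exists_perm_submatrix_det_ne_zero hpn' Q hQ
  set D : Matrix (Fin p) (Fin p) ℝ := Q.submatrix (fun k => σ₀ (e1 k)) e1 with hDdef
  have hmax' : ∀ σ : Equiv.Perm (Fin n),
      |(Q.submatrix (fun k => σ (e1 k)) e1).det| ≤ |D.det| :=
    fun σ => hmax σ (Finset.mem_univ σ)
  have hdet : D.det ≠ 0 := by
    intro h0
    have h1 := hmax' σ₁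
    have h2 : 0 < |(Q.submatrix (fun k => σ₁ (e1 k)) e1).det| := abs_pos.mpr hσ₁
    rw [h0, abs_zero] at h1
    linarith
  have hdetU : IsUnit D.det := isUnit_iff_ne_zero.mpr hdet
  set Q21 : Matrix (Fin (n - p)) (Fin p) ℝ := Q.submatrix (fun i => σ₀ (e2 i)) e1 with hQ21def
  set V : Matrix (Fin (n - p)) (Fin (n - p)) ℝ := Q.submatrix (fun i => σ₀ (e2 i)) e2 with hVdef
  set C : Matrix (Fin (n - p)) (Fin p) ℝ := Q21 * D⁻¹ with hCdef
  have hCD : C * D = Q21 := by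
    rw [hCdef, Matrix.mul_assoc, Matrix.nonsing_inv_mul D hdetU, Matrix.mul_one]
  -- entries of C bounded by 1
  have hCb : ∀ (i : Fin (n - p)) (j : Fin p), |C i j| ≤ 1 := by
    intro i j
    set σ' : Equiv.Perm (Fin n) := (Equiv.swap (e1 j) (e2 i)).trans σ₀ with hσ'def
    have hsub' : Q.submatrix (fun k => σ' (e1 k)) e1 = D.updateRow j (Q21 i) := by
      ext k l
      by_cases hk : k = j
      · subst hk
        rw [Matrix.updateRow_self]
        have h1 : σ' (e1 k) = σ₀ (e2 i) := by
          simp [hσ'def, Equiv.trans_apply, Equiv.swap_apply_left]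
        simp [Matrix.submatrix_apply, h1, hQ21def]
      · rw [Matrix.updateRow_ne hk]
        have h1 : e1 k ≠ e1 j := fun h => hk (emb1_inj hpn' h)
        have h2 : e1 k ≠ e2 i := by
          intro h
          have h3 := congrArg Fin.val h
          simp only [he1def, he2def, emb1, emb2] at h3
          have := k.2
          omega
        have h4 : σ' (e1 k) = σ₀ (e1 k) := by
          simp [hσ'def, Equiv.trans_apply, Equiv.swap_apply_of_ne_of_ne h1 h2]
        simp [Matrix.submatrix_apply, h4, hDdef]
    have hrow : Q21 i = ∑ l, C i l • D l := by
      funext l'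
      rw [← hCD]
      simp [Matrix.mul_apply, Finset.sum_apply, smul_eq_mul]
    have hdet' : (Q.submatrix (fun k => σ' (e1 k)) e1).det = C i j * D.det := by
      rw [hsub', hrow, Matrix.det_updateRow_sum]
      simp [smul_eq_mul]
    have h1 := hmax' σ'
    rw [hdet', abs_mul] at h1
    have h2 : |C i j| * |D.det| ≤ 1 * |D.det| := by rwa [one_mul]
    exact le_of_mul_le_mul_right h2 (abs_pos.mpr hdet)
  set c₁ : ℝ := 1 + (p : ℝ) * ((n - p : ℕ) : ℝ) with hc₁def
  have hc₁pos : 0 < c₁ := by positivity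
  have hc₁ge1 : 1 ≤ c₁ := by
    have : 0 ≤ (p : ℝ) * ((n - p : ℕ) : ℝ) := by positivity
    linarith
  have hQ' : Q * Qᵀ = 1 := mul_eq_one_comm.mp hQ
  set B' : Matrix (Fin n) (Fin p) ℝ := Q.submatrix (fun i => σ₀ i) e1 with hB'def
  have hB'tB' : B'ᵀ * B' = 1 := subTtS hQ σ₀ e1 (emb1_inj hpn')
  -- pythagoras for columns
  have pyth1 : ∀ u : Fin p → ℝ,
      (D *ᵥ u) ⬝ᵥ (D *ᵥ u) + (Q21 *ᵥ u) ⬝ᵥ (Q21 *ᵥ u) = u ⬝ᵥ u := by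
    intro u
    have hiso : (B' *ᵥ u) ⬝ᵥ (B' *ᵥ u) = u ⬝ᵥ u := dot_mulVec_self hB'tB' u
    have hsplit := sum_split hpn' (fun i => (B' *ᵥ u) i * (B' *ᵥ u) i)
    have hL : (B' *ᵥ u) ⬝ᵥ (B' *ᵥ u) = ∑ i, (B' *ᵥ u) i * (B' *ᵥ u) i := rfl
    have hfst : ∀ k : Fin p, (B' *ᵥ u) (e1 k) = (D *ᵥ u) k := fun k => rfl
    have hsnd : ∀ k : Fin (n - p), (B' *ᵥ u) (e2 k) = (Q21 *ᵥ u) k := fun k => rfl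
    rw [hL, hsplit] at hiso
    exact hiso
  -- key quantitative bound for D
  have key1 : ∀ u : Fin p → ℝ, u ⬝ᵥ u ≤ c₁ * ((D *ᵥ u) ⬝ᵥ (D *ᵥ u)) := by
    intro u
    have hp1 := pyth1 u
    set w : Fin p → ℝ := D *ᵥ u with hwdef
    have hQu : Q21 *ᵥ u = C *ᵥ w := by
      rw [hwdef, Matrix.mulVec_mulVec, hCD]
    have hww : w ⬝ᵥ w = ∑ l, (w l) ^ 2 := by simp [dotProduct, sq]
    have hterm : ∀ k : Fin (n - p), ((C *ᵥ w) k) ^ 2 ≤ (p : ℝ) * (w ⬝ᵥ w) := by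
      intro k
      have hcs := Finset.sum_mul_sq_le_sq_mul_sq Finset.univ (fun l => C k l) w
      have h1 : (C *ᵥ w) k = ∑ l, C k l * w l := rfl
      have h2 : ∑ l, (C k l) ^ 2 ≤ (p : ℝ) := by
        calc ∑ l, (C k l) ^ 2 ≤ ∑ _l : Fin p, (1 : ℝ) := by
              refine Finset.sum_le_sum fun l _ => ?_
              have h3 := hCb k l
              nlinarith [abs_nonneg (C k l), sq_abs (C k l)]
          _ = (p : ℝ) := by simp
      have h3 : (0 : ℝ) ≤ ∑ l, (w l) ^ 2 := Finset.sum_nonneg fun _ _ => sq_nonneg _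
      rw [h1, hww]
      calc (∑ l, C k l * w l) ^ 2 ≤ (∑ l, (C k l) ^ 2) * (∑ l, (w l) ^ 2) := hcs
        _ ≤ (p : ℝ) * ∑ l, (w l) ^ 2 := mul_le_mul_of_nonneg_right h2 h3
    have hsum2 : (Q21 *ᵥ u) ⬝ᵥ (Q21 *ᵥ u) ≤ ((n - p : ℕ) : ℝ) * ((p : ℝ) * (w ⬝ᵥ w)) := by
      rw [hQu]
      have hdd : (C *ᵥ w) ⬝ᵥ (C *ᵥ w) = ∑ k, ((C *ᵥ w) k) ^ 2 := by
        simp [dotProduct, sq]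
      rw [hdd]
      calc ∑ k : Fin (n - p), ((C *ᵥ w) k) ^ 2
          ≤ ∑ _k : Fin (n - p), (p : ℝ) * (w ⬝ᵥ w) := Finset.sum_le_sum fun k _ => hterm k
        _ = ((n - p : ℕ) : ℝ) * ((p : ℝ) * (w ⬝ᵥ w)) := by
            simp [Finset.sum_const, Finset.card_univ, nsmul_eq_mul]
    calc u ⬝ᵥ u = w ⬝ᵥ w + (Q21 *ᵥ u) ⬝ᵥ (Q21 *ᵥ u) := hp1.symm
      _ ≤ w ⬝ᵥ w + ((n - p : ℕ) : ℝ) * ((p : ℝ) * (w ⬝ᵥ w)) := by linarith [hsum2]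
      _ = c₁ * (w ⬝ᵥ w) := by rw [hc₁def]; ring
  -- bound on Q21 (columns direction)
  have key2 : ∀ u : Fin p → ℝ,
      c₁ * ((Q21 *ᵥ u) ⬝ᵥ (Q21 *ᵥ u)) ≤ (c₁ - 1) * (u ⬝ᵥ u) := by
    intro u
    have h1 := key1 u
    have h2 := pyth1 u
    have hY : (Q21 *ᵥ u) ⬝ᵥ (Q21 *ᵥ u) = u ⬝ᵥ u - (D *ᵥ u) ⬝ᵥ (D *ᵥ u) := by linarith
    rw [hY]
    nlinarith [h1]
  have key3 : ∀ x : Fin (n - p) → ℝ,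
      c₁ * ((x ᵥ* Q21) ⬝ᵥ (x ᵥ* Q21)) ≤ (c₁ - 1) * (x ⬝ᵥ x) :=
    aux_transfer' Q21 hc₁pos (by linarith) key2
  -- pythagoras for rows
  have he2σinj : Function.Injective (fun i => σ₀ (e2 i)) :=
    fun a b hab => emb2_inj n p (σ₀.injective hab)
  set R : Matrix (Fin (n - p)) (Fin n) ℝ := Q.submatrix (fun i => σ₀ (e2 i)) id with hRdef
  have hRRt : R * Rᵀ = 1 := subStT hQ' (fun i => σ₀ (e2 i)) he2σinj
  have pyth2 : ∀ x : Fin (n - p) → ℝ,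
      (x ᵥ* Q21) ⬝ᵥ (x ᵥ* Q21) + (x ᵥ* V) ⬝ᵥ (x ᵥ* V) = x ⬝ᵥ x := by
    intro x
    have hiso : (x ᵥ* R) ⬝ᵥ (x ᵥ* R) = x ⬝ᵥ x := by
      have h1 : x ᵥ* R = Rᵀ *ᵥ x := (Matrix.mulVec_transpose R x).symm
      rw [h1]
      exact dot_mulVec_self (by rw [Matrix.transpose_transpose]; exact hRRt) x
    have hsplit := sum_split hpn' (fun j => (x ᵥ* R) j * (x ᵥ* R) j)
    have hL : (x ᵥ* R) ⬝ᵥ (x ᵥ* R) = ∑ j, (x ᵥ* R) j * (x ᵥ* R) j := rfl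
    have hfst : ∀ k : Fin p, (x ᵥ* R) (e1 k) = (x ᵥ* Q21) k := fun k => rfl
    have hsnd : ∀ k : Fin (n - p), (x ᵥ* R) (e2 k) = (x ᵥ* V) k := fun k => rfl
    rw [hL, hsplit] at hiso
    exact hiso
  have key4 : ∀ x : Fin (n - p) → ℝ, x ⬝ᵥ x ≤ c₁ * ((x ᵥ* V) ⬝ᵥ (x ᵥ* V)) := by
    intro x
    have h1 := key3 x
    have h2 := pyth2 x
    have hV : (x ᵥ* V) ⬝ᵥ (x ᵥ* V) = x ⬝ᵥ x - (x ᵥ* Q21) ⬝ᵥ (x ᵥ* Q21) := by linarith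
    have hstep : c₁ * ((x ᵥ* V) ⬝ᵥ (x ᵥ* V))
        = c₁ * (x ⬝ᵥ x) - c₁ * ((x ᵥ* Q21) ⬝ᵥ (x ᵥ* Q21)) := by rw [hV]; ring
    nlinarith [h1]
  have hdetV : V.det ≠ 0 := by
    intro h0
    obtain ⟨x, hx0, hxV⟩ := Matrix.exists_vecMul_eq_zero_iff.mpr h0
    have h1 := key4 x
    rw [hxV] at h1
    simp only [zero_dotProduct, mul_zero] at h1
    exact hx0 (dotProduct_self_eq_zero.mp (le_antisymm h1 (dot_self_nonneg x)))
  have hdetVU : IsUnit V.det := isUnit_iff_ne_zero.mpr hdetV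
  have hVU : IsUnit V := (Matrix.isUnit_iff_isUnit_det V).mpr hdetVU
  have key5 : ∀ y : Fin (n - p) → ℝ,
      (y ᵥ* V⁻¹) ⬝ᵥ (y ᵥ* V⁻¹) ≤ c₁ * (y ⬝ᵥ y) := by
    intro y
    have h1 := key4 (y ᵥ* V⁻¹)
    rwa [Matrix.vecMul_vecMul, Matrix.nonsing_inv_mul V hdetVU, Matrix.vecMul_one] at h1
  have key6 : ∀ y : Fin (n - p) → ℝ,
      (V⁻¹ *ᵥ y) ⬝ᵥ (V⁻¹ *ᵥ y) ≤ c₁ * (y ⬝ᵥ y) := by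
    intro y
    have h := aux_transfer V⁻¹ (a := 1) (b := c₁) one_pos hc₁pos.le
      (fun u => by simpa [one_mul] using key5 u) y
    simpa [one_mul] using h
  refine ⟨σ₀, ?_⟩
  intro V₂₂ hV₂₂
  have hVeq : V₂₂ = V := by
    rw [hV₂₂, hVdef]
    ext i j
    rfl
  refine ⟨hVeq ▸ hVU, ?_⟩
  rw [hVeq]
  have hnorm : ‖Matrix.toEuclideanCLM (𝕜 := ℝ) V⁻¹‖ ≤ Real.sqrt c₁ := by
    apply ContinuousLinearMap.opNorm_le_bound _ (Real.sqrt_nonneg _)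
    intro y
    set y₀ : Fin (n - p) → ℝ := (WithLp.equiv 2 (Fin (n - p) → ℝ)) y with hy₀def
    have happ : ∀ i, (Matrix.toEuclideanCLM (𝕜 := ℝ) V⁻¹ y) i = (V⁻¹ *ᵥ y₀) i := by
      intro i
      have h1 := Matrix.ofLp_toEuclideanCLM (V⁻¹) y
      have h2 := congrFun h1 i
      exact h2
    have hTy : ‖Matrix.toEuclideanCLM (𝕜 := ℝ) V⁻¹ y‖ ^ 2 = (V⁻¹ *ᵥ y₀) ⬝ᵥ (V⁻¹ *ᵥ y₀) := by
      rw [EuclideanSpace.norm_eq, Real.sq_sqrt (by positivity)]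
      calc ∑ i, ‖(Matrix.toEuclideanCLM (𝕜 := ℝ) V⁻¹ y) i‖ ^ 2
          = ∑ i, ((V⁻¹ *ᵥ y₀) i) * ((V⁻¹ *ᵥ y₀) i) := by
            refine Finset.sum_congr rfl fun i _ => ?_
            rw [happ i, Real.norm_eq_abs, sq_abs, sq]
        _ = (V⁻¹ *ᵥ y₀) ⬝ᵥ (V⁻¹ *ᵥ y₀) := rfl
    have hy' : ‖y‖ ^ 2 = y₀ ⬝ᵥ y₀ := by
      rw [EuclideanSpace.norm_eq, Real.sq_sqrt (by positivity)]
      calc ∑ i, ‖y i‖ ^ 2 = ∑ i, (y₀ i) * (y₀ i) := by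
            refine Finset.sum_congr rfl fun i _ => ?_
            rw [Real.norm_eq_abs, sq_abs, sq]
            rfl
        _ = y₀ ⬝ᵥ y₀ := rfl
    have h1 : ‖Matrix.toEuclideanCLM (𝕜 := ℝ) V⁻¹ y‖ ^ 2 ≤ c₁ * ‖y‖ ^ 2 := by
      rw [hTy, hy']; exact key6 y₀
    calc ‖Matrix.toEuclideanCLM (𝕜 := ℝ) V⁻¹ y‖
        = Real.sqrt (‖Matrix.toEuclideanCLM (𝕜 := ℝ) V⁻¹ y‖ ^ 2) :=
          (Real.sqrt_sq (norm_nonneg _)).symm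
      _ ≤ Real.sqrt (c₁ * ‖y‖ ^ 2) := Real.sqrt_le_sqrt h1
      _ = Real.sqrt c₁ * ‖y‖ := by
          rw [Real.sqrt_mul hc₁pos.le, Real.sqrt_sq (norm_nonneg _)]
  have h2 : ‖Matrix.toEuclideanCLM (𝕜 := ℝ) V⁻¹‖ ^ 2 ≤ c₁ := by
    have h3 := pow_le_pow_left₀ (norm_nonneg _) hnorm 2
    rwa [Real.sq_sqrt hc₁pos.le] at h3
  refine h2.trans ?_
  have hcast : ((n - p : ℕ) : ℝ) = (n : ℝ) - (p : ℝ) := by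
    rw [Nat.cast_sub hpn']
  rw [hc₁def, hcast]
  have h3 : (1 : ℝ) ≤ (n : ℝ) - p := by
    have h4 : ((p : ℝ) + 1) ≤ (n : ℝ) := by exact_mod_cast hpn
    linarith
  have h5 : (0 : ℝ) ≤ (p : ℝ) := Nat.cast_nonneg p
  nlinarith
end

section
/- Let Ω ⊆ ℝ^d be a measurable set, ε ≥ 0, C > 0, and let f_1, …, f_n ∈ L²(Ω) have Gram matrix M with ε-rank r_ε(M) = p for some integer 1 ≤ p ≤ n. Suppose f = Σ_{j=1}^n β_j f_j with ‖β‖² ≤ C. Then there exists a subset J ⊆ {1, …, n} with |J| = p and coefficients (γ_j)_{j∈J} such that the function f̃ = Σ_{j∈J} γ_j f_j satisfies ‖f − f̃‖²_{L²(Ω)} ≤ C (p+1)(n−p)² ε. -/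
open MeasureTheory Matrix Finset

section helpers

lemma quadform_le {n : ℕ} (M : Matrix (Fin n) (Fin n) ℝ)
    (μ : Fin n → ℝ) (b : OrthonormalBasis (Fin n) ℝ (EuclideanSpace ℝ (Fin n)))
    (hmv : ∀ i, M *ᵥ ⇑(b i) = μ i • ⇑(b i))
    (ε : ℝ) (hε : 0 ≤ ε) (x : Fin n → ℝ)
    (hx : ∀ k, ε < μ k →
      (inner ℝ (b k) ((WithLp.equiv 2 (Fin n → ℝ)).symm x) : ℝ) = 0) :
    ∑ i, ∑ j, x i * M i j * x j ≤ ε * ∑ j, x j ^ 2 := by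
  set y : EuclideanSpace ℝ (Fin n) := (WithLp.equiv 2 (Fin n → ℝ)).symm x with hy
  set c : Fin n → ℝ := fun i => (inner ℝ (b i) y : ℝ) with hc
  have h1 : y = ∑ i, c i • b i := (b.sum_repr' y).symm
  have hck : ∀ k, c k = ∑ i, b k i * x i := by
    intro k
    show (inner ℝ (b k) y : ℝ) = _
    rw [PiLp.inner_apply]
    simp only [RCLike.inner_apply', conj_trivial]
    rfl
  have hxf : ∀ j, x j = ∑ i, c i * b i j := by
    intro j
    have h2 := congrFun (congrArg (fun (z : EuclideanSpace ℝ (Fin n)) => (z : Fin n → ℝ)) h1) j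
    have h3 : (∑ i, c i • b i) j = ∑ i, c i * b i j :=
      by simp [WithLp.ofLp_sum, Finset.sum_apply]
    exact h2.trans h3
  have hmvx : M *ᵥ x = fun j => ∑ i, c i * (μ i * b i j) := by
    have hx2 : x = ∑ i, c i • (b i : Fin n → ℝ) := by
      funext j; rw [hxf j, Finset.sum_apply]; simp
    conv_lhs => rw [hx2]
    rw [← Matrix.mulVecLin_apply, map_sum]
    funext j
    simp only [Finset.sum_apply]
    refine Finset.sum_congr rfl fun i _ => ?_
    rw [LinearMap.map_smul, Matrix.mulVecLin_apply]
    have h7 := congrFun (hmv i) j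
    show c i * (M *ᵥ ⇑(b i)) j = c i * (μ i * b i j)
    rw [h7]
    rfl
  have key : ∑ i, ∑ j, x i * M i j * x j = ∑ k, μ k * c k ^ 2 := by
    have lhs1 : ∑ i, ∑ j, x i * M i j * x j = ∑ i, x i * (M *ᵥ x) i := by
      refine Finset.sum_congr rfl fun i _ => ?_
      rw [Matrix.mulVec, dotProduct, Finset.mul_sum]
      exact Finset.sum_congr rfl fun j _ => by ring
    rw [lhs1, hmvx]
    have h4 : ∀ i, x i * (∑ k, c k * (μ k * b k i))
        = ∑ k, c k * μ k * (b k i * x i) := by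
      intro i; rw [Finset.mul_sum]; exact Finset.sum_congr rfl fun k _ => by ring
    simp_rw [h4]
    rw [Finset.sum_comm]
    refine Finset.sum_congr rfl fun k _ => ?_
    rw [← Finset.mul_sum, ← hck k]
    ring
  rw [key]
  have hpar : ∑ k, c k ^ 2 = ‖y‖ ^ 2 := by
    rw [← real_inner_self_eq_norm_sq, ← b.sum_inner_mul_inner y y]
    refine Finset.sum_congr rfl fun k _ => ?_
    have h6 : (inner ℝ y (b k) : ℝ) = c k := (real_inner_comm y (b k)).symm
    rw [h6]
    show c k ^ 2 = c k * c k
    ring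
  have hnorm : ‖y‖ ^ 2 = ∑ j, x j ^ 2 := by
    rw [EuclideanSpace.norm_eq, Real.sq_sqrt (by positivity)]
    refine Finset.sum_congr rfl fun j _ => ?_
    rw [Real.norm_eq_abs, sq_abs]
    rfl
  calc ∑ k, μ k * c k ^ 2 ≤ ∑ k, ε * c k ^ 2 := by
        refine Finset.sum_le_sum fun k _ => ?_
        by_cases hk : ε < μ k
        · have h0 : c k = 0 := hx k hk
          rw [h0]; simp
        · exact mul_le_mul_of_nonneg_right (not_lt.1 hk) (sq_nonneg _)
    _ = ε * ∑ k, c k ^ 2 := by rw [Finset.mul_sum]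
    _ = ε * ∑ j, x j ^ 2 := by rw [hpar, hnorm]


lemma det_updateRow_sum'' {p : ℕ} {ι : Type*} (A : Matrix (Fin p) (Fin p) ℝ) (k : Fin p)
    (s : Finset ι) (c : ι → ℝ) (w : ι → Fin p → ℝ) :
    (A.updateRow k (∑ j ∈ s, c j • w j)).det = ∑ j ∈ s, c j * (A.updateRow k (w j)).det := by
  classical
  induction s using Finset.induction with
  | empty =>
      simp only [Finset.sum_empty]
      exact Matrix.det_eq_zero_of_row_eq_zero k (fun j => by simp)
  | insert a s h ih =>
      rw [Finset.sum_insert h, Finset.sum_insert h, Matrix.det_updateRow_add,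
        Matrix.det_updateRow_smul, ih]

lemma subset_selection {n p : ℕ} (W : Matrix (Fin n) (Fin p) ℝ)
    (hex : ∃ g : Fin p → Fin n, (Matrix.of fun k s => W (g k) s).det ≠ 0)
    (β : Fin n → ℝ) :
    ∃ J : Finset (Fin n), J.card = p ∧ ∃ x : Fin n → ℝ,
      (∀ s : Fin p, ∑ j, W j s * x j = 0) ∧ (∀ j ∉ J, x j = β j) ∧
      ∀ j ∈ J, |x j| ≤ ∑ i ∈ univ \ J, |β i| := by
  classical
  obtain ⟨g₁, hg₁⟩ := hex
  obtain ⟨g₀, -, hmax⟩ := Finset.exists_max_image Finset.univ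
    (fun g : Fin p → Fin n => |(Matrix.of fun k s => W (g k) s).det|) ⟨g₁, mem_univ _⟩
  set B : Matrix (Fin p) (Fin p) ℝ := Matrix.of fun k s => W (g₀ k) s with hB
  have hD : 0 < |B.det| := lt_of_lt_of_le (abs_pos.mpr hg₁) (hmax g₁ (mem_univ _))
  have hBdet : B.det ≠ 0 := fun h => by simp [h] at hD
  have hinj : Function.Injective g₀ := by
    intro k k' hkk'
    by_contra hne
    have : B k = B k' := by funext s; simp [hB, hkk']
    exact hBdet (Matrix.det_zero_of_row_eq hne this)
  set J : Finset (Fin n) := Finset.image g₀ univ with hJ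
  have hcard : J.card = p := by
    rw [hJ, Finset.card_image_of_injective _ hinj, card_univ, Fintype.card_fin]
  set A : Matrix (Fin p) (Fin p) ℝ := Bᵀ with hA
  have hAdet : A.det = B.det := Matrix.det_transpose B
  set b : Fin p → ℝ := fun s => -∑ j ∈ univ \ J, β j * W j s with hb
  set y : Fin p → ℝ := (B.det)⁻¹ • Matrix.cramer A b with hy
  have hAy : A *ᵥ y = b := by
    rw [hy, Matrix.mulVec_smul, Matrix.mulVec_cramer, hAdet, smul_smul,
      inv_mul_cancel₀ hBdet, one_smul]
  set x : Fin n → ℝ :=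
    fun j => (∑ k, if g₀ k = j then y k else 0) + (if j ∈ J then 0 else β j) with hx
  have hxg : ∀ k, x (g₀ k) = y k := by
    intro k
    have hmem : g₀ k ∈ J := Finset.mem_image_of_mem _ (mem_univ k)
    rw [hx]
    simp only [hmem, if_true, add_zero]
    rw [Finset.sum_congr rfl (fun k' _ => by
      rw [show (if g₀ k' = g₀ k then y k' else 0) = if k' = k then y k' else 0 from by
        congr 1; exact propext ⟨fun h => hinj h, fun h => by rw [h]⟩])]
    simp
  have hxout : ∀ j ∉ J, x j = β j := by
    intro j hj
    rw [hx]
    simp only [hj, if_false]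
    rw [Finset.sum_eq_zero, zero_add]
    intro k _
    have : g₀ k ≠ j := fun h => hj (h ▸ Finset.mem_image_of_mem _ (mem_univ k))
    simp [this]
  refine ⟨J, hcard, x, ?_, hxout, ?_⟩
  · intro s
    rw [← Finset.sum_sdiff (Finset.subset_univ J)]
    have h1 : ∑ j ∈ J, W j s * x j = b s := by
      rw [hJ, Finset.sum_image (fun k _ k' _ h => hinj h)]
      have : ∀ k, W (g₀ k) s * x (g₀ k) = A s k * y k := by
        intro k; rw [hxg k]; rfl
      rw [Finset.sum_congr rfl fun k _ => this k]
      exact congrFun hAy s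
    have h2 : ∑ j ∈ univ \ J, W j s * x j = -b s := by
      rw [hb]
      rw [neg_neg]
      exact Finset.sum_congr rfl fun j hj => by
        rw [hxout j (Finset.mem_sdiff.mp hj).2]; ring
    rw [h1, h2]; ring
  · intro j hj
    obtain ⟨k, -, rfl⟩ := Finset.mem_image.mp hj
    rw [hxg k]
    have hbsum : b = ∑ i ∈ univ \ J, (-β i) • (fun s => W i s) := by
      funext s
      rw [hb, Finset.sum_apply]
      rw [neg_eq_iff_eq_neg, ← Finset.sum_neg_distrib]
      exact Finset.sum_congr rfl fun i _ => by simp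
    have hup : ∀ i : Fin n, B.updateRow k (fun s => W i s)
        = Matrix.of fun k' s => W (Function.update g₀ k i k') s := by
      intro i
      funext k' s
      rw [Matrix.updateRow_apply]
      by_cases h : k' = k <;> simp [h, Function.update_apply, hB]
    have hcram : Matrix.cramer A b k
        = ∑ i ∈ univ \ J, (-β i) * (B.updateRow k (fun s => W i s)).det := by
      rw [Matrix.cramer_apply, hA, Matrix.updateCol_transpose, Matrix.det_transpose,
        hbsum, det_updateRow_sum'']
    have hbound : |Matrix.cramer A b k| ≤ |B.det| * ∑ i ∈ univ \ J, |β i| := by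
      rw [hcram]
      calc |∑ i ∈ univ \ J, (-β i) * (B.updateRow k (fun s => W i s)).det|
          ≤ ∑ i ∈ univ \ J, |(-β i) * (B.updateRow k (fun s => W i s)).det| :=
            Finset.abs_sum_le_sum_abs _ _
        _ ≤ ∑ i ∈ univ \ J, |β i| * |B.det| := by
            refine Finset.sum_le_sum fun i _ => ?_
            rw [abs_mul, abs_neg]
            refine mul_le_mul_of_nonneg_left ?_ (abs_nonneg _)
            rw [hup i]
            exact hmax (Function.update g₀ k i) (mem_univ _)
        _ = |B.det| * ∑ i ∈ univ \ J, |β i| := by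
            rw [Finset.mul_sum]; exact Finset.sum_congr rfl fun i _ => by ring
    have hyk : |y k| ≤ ∑ i ∈ univ \ J, |β i| := by
      have : y k = (B.det)⁻¹ * Matrix.cramer A b k := rfl
      rw [this, abs_mul, abs_inv]
      calc |B.det|⁻¹ * |Matrix.cramer A b k|
          ≤ |B.det|⁻¹ * (|B.det| * ∑ i ∈ univ \ J, |β i|) :=
            mul_le_mul_of_nonneg_left hbound (inv_nonneg.mpr (abs_nonneg _))
        _ = ∑ i ∈ univ \ J, |β i| := by
            rw [← mul_assoc, inv_mul_cancel₀ (ne_of_gt hD), one_mul]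
    exact hyk


lemma exists_nonzero_minor {n p : ℕ} (W : Matrix (Fin n) (Fin p) ℝ)
    (hind : LinearIndependent ℝ (fun s : Fin p => (fun j => W j s : Fin n → ℝ))) :
    ∃ g : Fin p → Fin n, (Matrix.of fun k s => W (g k) s).det ≠ 0 := by
  classical
  set v : Fin n → EuclideanSpace ℝ (Fin p) :=
    fun j => (WithLp.equiv 2 (Fin p → ℝ)).symm (W j) with hv
  -- rows span
  have hspan : Submodule.span ℝ (Set.range v) = ⊤ := by
    by_contra h
    have hbot : (Submodule.span ℝ (Set.range v))ᗮ ≠ ⊥ := by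
      intro hb
      exact h (Submodule.orthogonal_eq_bot_iff.mp hb)
    obtain ⟨z, hz, hz0⟩ := Submodule.exists_mem_ne_zero_of_ne_bot hbot
    have hzj : ∀ j, (inner ℝ (v j) z : ℝ) = 0 := by
      intro j
      exact (Submodule.mem_orthogonal _ _).mp hz (v j)
        (Submodule.subset_span (Set.mem_range_self j))
    have hsum : ∑ s, z s • (fun j => W j s : Fin n → ℝ) = 0 := by
      funext j
      rw [Finset.sum_apply]
      have := hzj j
      rw [PiLp.inner_apply] at this
      simp only [RCLike.inner_apply', conj_trivial] at this
      simp only [Pi.smul_apply, smul_eq_mul, Pi.zero_apply]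
      rw [← this]
      exact Finset.sum_congr rfl fun s _ => by rw [mul_comm]; rfl
    have := (Fintype.linearIndependent_iff.mp hind) (fun s => z s) hsum
    exact hz0 (by ext s; exact this s)
  obtain ⟨bs, hb₁, hb₂, hb₃⟩ := exists_linearIndependent ℝ (Set.range v)
  rw [hspan] at hb₂
  have hbfin : bs.Finite := Set.Finite.subset (Set.finite_range v) hb₁
  haveI : Fintype bs := hbfin.fintype
  have basis : Module.Basis bs ℝ (EuclideanSpace ℝ (Fin p)) := Module.Basis.mk hb₃ (by rw [Subtype.range_coe]; exact hb₂.ge)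
  have hcardb : Fintype.card bs = p := by
    rw [← Module.finrank_eq_card_basis basis, finrank_euclideanSpace, Fintype.card_fin]
  have e : Fin p ≃ bs := (Fintype.equivFinOfCardEq hcardb).symm
  have hchoice : ∀ w : bs, ∃ j, v j = (w : EuclideanSpace ℝ (Fin p)) := fun w => hb₁ w.2
  choose gfun hgfun using hchoice
  refine ⟨fun k => gfun (e k), ?_⟩
  have hrows : LinearIndependent ℝ (fun k : Fin p => v (gfun (e k))) := by
    have : (fun k : Fin p => v (gfun (e k)))
        = (fun w : bs => (w : EuclideanSpace ℝ (Fin p))) ∘ e := by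
      funext k; rw [hgfun]; rfl
    rw [this]
    exact hb₃.comp e e.injective
  -- transfer to plain functions and det
  have hrows' : LinearIndependent ℝ
      (fun k : Fin p => ((Matrix.of fun k' s => W (gfun (e k')) s) k : Fin p → ℝ)) := by
    have h2 := hrows.map' (WithLp.linearEquiv 2 ℝ (Fin p → ℝ)).toLinearMap
      (LinearEquiv.ker _)
    exact h2
  have := Matrix.linearIndependent_rows_iff_isUnit.mp hrows'
  rw [Matrix.isUnit_iff_isUnit_det] at this
  exact isUnit_iff_ne_zero.mp this

lemma norm_sq_sum_smul {α : Type*} [MeasurableSpace α] {μm : Measure α} {n : ℕ}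
    (f : Fin n → Lp ℝ 2 μm) (M : Matrix (Fin n) (Fin n) ℝ)
    (hM : ∀ i j, M i j = (inner ℝ (f i) (f j) : ℝ)) (x : Fin n → ℝ) :
    ‖∑ j, x j • f j‖ ^ 2 = ∑ i, ∑ j, x i * M i j * x j := by
  rw [← real_inner_self_eq_norm_sq, sum_inner]
  refine Finset.sum_congr rfl fun i _ => ?_
  rw [inner_sum]
  refine Finset.sum_congr rfl fun j _ => ?_
  rw [real_inner_smul_left, real_inner_smul_right, hM]
  ring

end helpers

set_option maxHeartbeats 1000000 in
/-- Theorem 3.1 of the paper.  Let `Ω ⊆ ℝ^d` be measurable, `ε ≥ 0`,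
`C > 0`, and `f_1, …, f_n ∈ L²(Ω)` with Gram matrix `M` of `ε`-rank `p` (`1 ≤ p ≤ n`).
If `f = ∑_j β_j f_j` with `‖β‖² ≤ C`, then there are a subset `J` with `|J| = p` and
coefficients `γ` such that `f̃ = ∑_{j∈J} γ_j f_j` satisfies
`‖f − f̃‖² ≤ C (p+1)(n−p)² ε`. -/
theorem exists_subset_approximation_of_eps_rank
    (d n p : ℕ) (hp1 : 1 ≤ p) (hpn : p ≤ n)
    (Ω : Set (EuclideanSpace ℝ (Fin d))) (hΩ : MeasurableSet Ω)
    (ε C : ℝ) (hε : 0 ≤ ε) (hC : 0 < C)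
    (f : Fin n → Lp ℝ 2 (volume.restrict Ω))
    (M : Matrix (Fin n) (Fin n) ℝ)
    (hM : ∀ i j, M i j = ∫ x, (f i : EuclideanSpace ℝ (Fin d) → ℝ) x *
      (f j : EuclideanSpace ℝ (Fin d) → ℝ) x ∂(volume.restrict Ω))
    (hHerm : M.IsHermitian)
    (hrank : (Finset.univ.filter (fun i => ε < hHerm.eigenvalues i)).card = p)
    (β : Fin n → ℝ) (hβ : ∑ j, (β j) ^ 2 ≤ C)
    (F : Lp ℝ 2 (volume.restrict Ω)) (hF : F = ∑ j, β j • f j) :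
    ∃ J : Finset (Fin n), J.card = p ∧
      ∃ γ : Fin n → ℝ,
        ‖F - ∑ j ∈ J, γ j • f j‖ ^ 2 ≤ C * ((p : ℝ) + 1) * ((n : ℝ) - p) ^ 2 * ε := by
  classical
  rcases eq_or_lt_of_le hpn with hpn' | hpn'
  · -- p = n
    refine ⟨Finset.univ, by simp [← hpn'], β, ?_⟩
    rw [hF]
    simp only [sub_self]
    have : ((n : ℝ) - p) = 0 := by rw [hpn']; ring
    rw [this]
    simp
  · -- p < n
    have hMinner : ∀ i j, M i j = (inner ℝ (f i) (f j) : ℝ) := by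
      intro i j
      rw [hM, MeasureTheory.L2.inner_def]
      simp only [RCLike.inner_apply', conj_trivial]
    set b := hHerm.eigenvectorBasis with hb
    set μ := hHerm.eigenvalues with hμ
    set S := (Finset.univ.filter (fun i => ε < μ i)) with hS
    have e : Fin p ≃ ↥S := (Finset.equivFinOfCardEq hrank).symm
    set W : Matrix (Fin n) (Fin p) ℝ := Matrix.of fun j s => b (e s : Fin n) j with hW
    -- columns of W are linearly independent
    have hind : LinearIndependent ℝ (fun s : Fin p => (fun j => W j s : Fin n → ℝ)) := by
      have ho : Orthonormal ℝ (fun s : Fin p => b (e s : Fin n)) :=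
        b.orthonormal.comp _ (fun s t hst => e.injective (Subtype.ext hst))
      have hli := ho.linearIndependent
      have h2 := hli.map' (WithLp.linearEquiv 2 ℝ (Fin n → ℝ)).toLinearMap
        (LinearEquiv.ker _)
      exact h2
    obtain ⟨J, hcard, x, hWx, hout, hbd⟩ :=
      subset_selection W (exists_nonzero_minor W hind) β
    refine ⟨J, hcard, fun j => β j - x j, ?_⟩
    have hdiff : F - ∑ j ∈ J, (β j - x j) • f j = ∑ j, x j • f j := by
      rw [hF, ← Finset.sum_sdiff (Finset.subset_univ J) (f := fun j => β j • f j),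
          ← Finset.sum_sdiff (Finset.subset_univ J) (f := fun j => x j • f j)]
      have h1 : ∑ j ∈ univ \ J, x j • f j = ∑ j ∈ univ \ J, β j • f j :=
        Finset.sum_congr rfl fun j hj => by rw [hout j (Finset.mem_sdiff.mp hj).2]
      have h2 : ∑ j ∈ J, β j • f j - ∑ j ∈ J, (β j - x j) • f j = ∑ j ∈ J, x j • f j := by
        rw [← Finset.sum_sub_distrib]
        exact Finset.sum_congr rfl fun j _ => by rw [← sub_smul]; ring_nf
      rw [h1, ← h2]
      abel
    rw [hdiff, norm_sq_sum_smul f M hMinner x]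
    -- top components vanish
    have hx : ∀ k, ε < μ k →
        (inner ℝ (b k) ((WithLp.equiv 2 (Fin n → ℝ)).symm x) : ℝ) = 0 := by
      intro k hk
      have hkS : k ∈ S := Finset.mem_filter.mpr ⟨mem_univ k, hk⟩
      have : (inner ℝ (b k) ((WithLp.equiv 2 (Fin n → ℝ)).symm x) : ℝ)
          = ∑ j, W j (e.symm ⟨k, hkS⟩) * x j := by
        rw [PiLp.inner_apply]
        simp only [RCLike.inner_apply', conj_trivial]
        refine Finset.sum_congr rfl fun j _ => ?_
        rw [hW]
        simp only [Matrix.of_apply]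
        rw [e.apply_symm_apply]
        rfl
      rw [this, hWx]
    have hquad := quadform_le M μ b (fun i => hHerm.mulVec_eigenvectorBasis i) ε hε x hx
    -- bound on ∑ x j ^ 2
    have hnp : (1 : ℝ) ≤ (n : ℝ) - p := by
      have : (p : ℝ) + 1 ≤ n := by exact_mod_cast hpn'
      linarith
    have hcardc : ((univ \ J).card : ℝ) = (n : ℝ) - p := by
      rw [Finset.card_sdiff_of_subset (Finset.subset_univ J), card_univ, Fintype.card_fin, hcard]
      rw [Nat.cast_sub hpn]
    have hβpos : ∀ (s : Finset (Fin n)), ∑ j ∈ s, β j ^ 2 ≤ C := fun s =>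
      le_trans (Finset.sum_le_sum_of_subset_of_nonneg (Finset.subset_univ s)
        (fun _ _ _ => sq_nonneg _)) hβ
    have hsum1 : ∑ j ∈ univ \ J, x j ^ 2 ≤ C := by
      refine le_trans (le_of_eq (Finset.sum_congr rfl fun j hj => by
        rw [hout j (Finset.mem_sdiff.mp hj).2])) (hβpos _)
    have hCS : (∑ i ∈ univ \ J, |β i|) ^ 2 ≤ ((n : ℝ) - p) * C := by
      calc (∑ i ∈ univ \ J, |β i|) ^ 2
          ≤ ((univ \ J).card : ℝ) * ∑ i ∈ univ \ J, |β i| ^ 2 := by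
            exact sq_sum_le_card_mul_sum_sq
        _ ≤ ((n : ℝ) - p) * C := by
            rw [hcardc]
            refine mul_le_mul_of_nonneg_left ?_ (by linarith)
            simp only [sq_abs]
            exact hβpos _
    have hsum2 : ∑ j ∈ J, x j ^ 2 ≤ (p : ℝ) * (((n : ℝ) - p) * C) := by
      calc ∑ j ∈ J, x j ^ 2 ≤ ∑ j ∈ J, ((n : ℝ) - p) * C := by
            refine Finset.sum_le_sum fun j hj => ?_
            have := hbd j hj
            calc x j ^ 2 = |x j| ^ 2 := (sq_abs _).symm
              _ ≤ (∑ i ∈ univ \ J, |β i|) ^ 2 := by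
                  exact pow_le_pow_left₀ (abs_nonneg _) this 2
              _ ≤ ((n : ℝ) - p) * C := hCS
        _ = (p : ℝ) * (((n : ℝ) - p) * C) := by
            rw [Finset.sum_const, hcard, nsmul_eq_mul]
    have hxtot : ∑ j, x j ^ 2 ≤ C * (1 + (p : ℝ) * ((n : ℝ) - p)) := by
      rw [← Finset.sum_sdiff (Finset.subset_univ J) (f := fun j => x j ^ 2)]
      nlinarith [hsum1, hsum2]
    calc ∑ i, ∑ j, x i * M i j * x j ≤ ε * ∑ j, x j ^ 2 := hquad
      _ ≤ ε * (C * (1 + (p : ℝ) * ((n : ℝ) - p))) :=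
          mul_le_mul_of_nonneg_left hxtot hε
      _ ≤ C * ((p : ℝ) + 1) * ((n : ℝ) - p) ^ 2 * ε := by
          have hp0 : (0 : ℝ) ≤ p := Nat.cast_nonneg p
          have h9 : 1 + (p : ℝ) * ((n : ℝ) - p) ≤ ((p : ℝ) + 1) * ((n : ℝ) - p) ^ 2 := by
            have ha : (0:ℝ) ≤ (n:ℝ) - p := by linarith
            have hb' : (0:ℝ) ≤ (n:ℝ) - p - 1 := by linarith
            nlinarith [mul_nonneg (mul_nonneg hp0 ha) hb', mul_nonneg hb' (by linarith : (0:ℝ) ≤ (n:ℝ) - p + 1)]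
          calc ε * (C * (1 + (p : ℝ) * ((n : ℝ) - p)))
              ≤ ε * (C * (((p : ℝ) + 1) * ((n : ℝ) - p) ^ 2)) := by
                refine mul_le_mul_of_nonneg_left ?_ hε
                exact mul_le_mul_of_nonneg_left h9 hC.le
            _ = C * ((p : ℝ) + 1) * ((n : ℝ) - p) ^ 2 * ε := by ring
end

section
/- Let Ω ⊆ ℝ^d be a measurable set, ε ≥ 0, C > 0, C_S > 0. Let φ_1, …, φ_n ∈ L²(Ω) have Gram matrix M with ε-rank r_ε(M) = p for some 1 ≤ p ≤ n, and let u_n = Σ_{j=1}^n β_j φ_j with ‖β‖² ≤ C. Let G : L²(Ω) → L²(Ω) be a map satisfying the stability condition ‖u − v‖ ≤ C_S ‖G(u) − G(v)‖ for all u, v ∈ L²(Ω), let f ∈ L²(Ω), and let u* ∈ L²(Ω) satisfy G(u*) = f. Let F_p ⊆ L²(Ω) be any set that contains Σ_{j∈J} γ_j φ_j for every subset J ⊆ {1,…,n} with |J| = p and every choice of coefficients γ. Then √(L(u_n)) ≥ (1/C_S) ( dist(u*, F_p) − √(C (p+1)(n−p)² ε) ), where L(u) = ‖G(u) − f‖²_{L²(Ω)}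 and dist(u, A) = inf_{v ∈ A} ‖u − v‖_{L²(Ω)}. -/
set_option maxHeartbeats 1000000

open MeasureTheory Matrix Finset

lemma exists_inj_det_ne_zero {m n : ℕ} (u : Fin m → (Fin n → ℝ)) (hu : LinearIndependent ℝ u) :
    ∃ f : Fin m → Fin n, Function.Injective f ∧ (Matrix.of fun s t => u t (f s)).det ≠ 0 := by
  classical
  set U : Matrix (Fin m) (Fin n) ℝ := Matrix.of u with hU
  have hrk : Uᵀ.rank = m := by
    rw [Matrix.rank_transpose]
    simpa using LinearIndependent.rank_matrix (M := U) hu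
  have hspan : Submodule.span ℝ (Set.range Uᵀ) = ⊤ := by
    apply Submodule.eq_top_of_finrank_eq
    rw [show Set.range Uᵀ = Set.range Uᵀ.row from rfl, ← Matrix.rank_eq_finrank_span_row, hrk, Module.finrank_pi]
    simp
  obtain ⟨b, hbsub, hbspan, hbind⟩ := exists_linearIndependent ℝ (Set.range Uᵀ)
  rw [hspan] at hbspan
  have hbfin : b.Finite := Set.Finite.subset (Set.finite_range _) hbsub
  haveI := hbfin.fintype
  have hbasis : Module.Basis b ℝ (Fin m → ℝ) := Module.Basis.mk hbind (by rw [Subtype.range_coe, hbspan])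
  have hcard : Fintype.card b = m := by
    have := Module.finrank_eq_card_basis hbasis
    rw [Module.finrank_pi] at this
    simpa using this.symm
  obtain ⟨e⟩ : Nonempty (Fin m ≃ b) := ⟨(Fintype.equivFinOfCardEq hcard).symm⟩
  have hpre : ∀ s : Fin m, ∃ j : Fin n, Uᵀ j = (e s : Fin m → ℝ) := fun s => hbsub (e s).2
  choose f hf using hpre
  have hfinj : Function.Injective f := by
    intro s s' h
    have : (e s : Fin m → ℝ) = (e s' : Fin m → ℝ) := by rw [← hf s, ← hf s', h]
    exact e.injective (Subtype.ext this)
  refine ⟨f, hfinj, ?_⟩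
  have hrows : (fun s => (Matrix.of fun s t => u t (f s)) s) = fun s => (e s : Fin m → ℝ) := by
    funext s
    have := hf s
    funext t
    have h2 := congrFun this t
    simpa [Matrix.transpose_apply, hU] using h2
  have hli : LinearIndependent ℝ (fun s => (Matrix.of fun s t => u t (f s)) s) := by
    rw [hrows]
    exact hbind.comp e e.injective
  have := Matrix.linearIndependent_rows_iff_isUnit.mp hli
  exact (Matrix.isUnit_iff_isUnit_det _).mp this |>.ne_zero

lemma row_selection {m n : ℕ} (u : Fin m → (Fin n → ℝ)) (hu : LinearIndependent ℝ u)
    (β : Fin n → ℝ) :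
    ∃ (T : Finset (Fin n)) (a : Fin m → ℝ), T.card = m ∧
      (∀ j ∈ T, (∑ t, a t * u t j) = β j) ∧
      (∀ j, |∑ t, a t * u t j| ≤ ∑ k ∈ T, |β k|) := by
  classical
  obtain ⟨f₀, hf0inj, hf0det⟩ : ∃ f : Fin m → Fin n, Function.Injective f ∧
      (Matrix.of fun s t => u t (f s)).det ≠ 0 := exists_inj_det_ne_zero u hu
  set D : (Fin m → Fin n) → ℝ := fun f => |(Matrix.of fun s t => u t (f s)).det| with hD
  obtain ⟨f₁, -, hmax⟩ := Finset.exists_max_image Finset.univ D ⟨f₀, Finset.mem_univ _⟩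
  have hmax' : ∀ f, D f ≤ D f₁ := fun f => hmax f (Finset.mem_univ f)
  set A : Matrix (Fin m) (Fin m) ℝ := Matrix.of fun s t => u t (f₁ s) with hA
  have hApos : 0 < |A.det| := lt_of_lt_of_le (abs_pos.mpr hf0det) (hmax' f₀)
  have hAdet : A.det ≠ 0 := fun h => by simp [h] at hApos
  have hAunit : IsUnit A.det := isUnit_iff_ne_zero.mpr hAdet
  have hf1inj : Function.Injective f₁ := by
    intro s s' hss
    by_contra hne
    have : A s = A s' := by funext t; simp [hA, hss]
    exact hAdet (Matrix.det_zero_of_row_eq hne this)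
  set T : Finset (Fin n) := Finset.image f₁ Finset.univ with hT
  have hTcard : T.card = m := by
    rw [hT, Finset.card_image_of_injective _ hf1inj, Finset.card_univ, Fintype.card_fin]
  set bT : Fin m → ℝ := fun s => β (f₁ s) with hbT
  set a : Fin m → ℝ := A⁻¹ *ᵥ bT with ha
  have hw : ∀ j, (∑ t, a t * u t j) = (fun t => u t j) ⬝ᵥ a := by
    intro j; simp [dotProduct, mul_comm]
  refine ⟨T, a, hTcard, ?_, ?_⟩
  · intro j hj
    obtain ⟨s₀, -, rfl⟩ := Finset.mem_image.mp hj
    have : (fun t => u t (f₁ s₀)) ⬝ᵥ a = (A *ᵥ (A⁻¹ *ᵥ bT)) s₀ := by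
      simp [Matrix.mulVec, hA, ha]
    rw [hw, this, Matrix.mulVec_mulVec, Matrix.mul_nonsing_inv _ hAunit, Matrix.one_mulVec]
  · intro j
    rw [hw]
    -- c = (fun t => u t j) ᵥ* A⁻¹
    set rowj : Fin m → ℝ := fun t => u t j with hrowj
    have hdot : rowj ⬝ᵥ a = (rowj ᵥ* A⁻¹) ⬝ᵥ bT := by
      rw [ha, dotProduct_mulVec]
    have hcs : ∀ s, |(rowj ᵥ* A⁻¹) s| ≤ 1 := by
      intro s
      have hinv : A⁻¹ = (A.det)⁻¹ • A.adjugate := by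
        rw [Matrix.inv_def, Ring.inverse_eq_inv']
      have hvm : rowj ᵥ* A.adjugate = Matrix.cramer Aᵀ rowj := by
        rw [Matrix.cramer_eq_adjugate_mulVec, ← Matrix.adjugate_transpose,
          Matrix.mulVec_transpose]
      have hcram : (rowj ᵥ* A.adjugate) s = (A.updateRow s rowj).det := by
        rw [hvm, Matrix.cramer_apply, Matrix.updateCol_transpose, Matrix.det_transpose]
      have hupd : A.updateRow s rowj = Matrix.of fun s' t => u t (Function.update f₁ s j s') := by
        funext s' t
        by_cases h : s' = s
        · subst h; simp [Matrix.updateRow_self, hrowj]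
        · rw [Matrix.updateRow_ne h]
          change A s' t = u t (Function.update f₁ s j s')
          rw [Function.update_of_ne h]
          rfl
      have hle : |(A.updateRow s rowj).det| ≤ |A.det| := by
        rw [hupd]; exact hmax' _
      rw [hinv]
      have : (rowj ᵥ* ((A.det)⁻¹ • A.adjugate)) s = (A.det)⁻¹ * (rowj ᵥ* A.adjugate) s := by
        simp [Matrix.vecMul, dotProduct, Matrix.smul_apply, Finset.mul_sum,
          mul_comm, mul_left_comm]
        exact Finset.sum_congr rfl fun x _ => by ring
      rw [this, hcram, abs_mul, abs_inv]
      rw [inv_mul_le_iff₀ hApos, mul_one]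
      exact hle
    rw [hdot]
    calc |(rowj ᵥ* A⁻¹) ⬝ᵥ bT| ≤ ∑ s, |(rowj ᵥ* A⁻¹) s| * |bT s| := by
          rw [dotProduct]
          refine (Finset.abs_sum_le_sum_abs _ _).trans ?_
          apply le_of_eq; simp [abs_mul]
      _ ≤ ∑ s, |bT s| := by
          apply Finset.sum_le_sum
          intro s _
          exact mul_le_of_le_one_left (abs_nonneg _) (hcs s)
      _ = ∑ k ∈ T, |β k| := by
          rw [hT, Finset.sum_image (fun a _ b _ h => hf1inj h)]

lemma dot_expand' {m n : ℕ} (c e : Fin m → ℝ) (u : Fin m → Fin n → ℝ) :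
    (∑ s, c s • u s) ⬝ᵥ (∑ t, e t • u t) = ∑ s, ∑ t, (c s * e t) * (u s ⬝ᵥ u t) := by
  calc (∑ s, c s • u s) ⬝ᵥ (∑ t, e t • u t)
      = ∑ j, (∑ s, c s * u s j) * (∑ t, e t * u t j) := by
        simp [dotProduct, Finset.sum_apply, Pi.smul_apply, smul_eq_mul]
    _ = ∑ j, ∑ s, ∑ t, (c s * u s j) * (e t * u t j) := by
        refine Finset.sum_congr rfl fun j _ => ?_
        rw [Finset.sum_mul_sum]
    _ = ∑ s, ∑ j, ∑ t, (c s * u s j) * (e t * u t j) := Finset.sum_comm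
    _ = ∑ s, ∑ t, ∑ j, (c s * u s j) * (e t * u t j) := by
        exact Finset.sum_congr rfl fun s _ => Finset.sum_comm
    _ = ∑ s, ∑ t, (c s * e t) * (u s ⬝ᵥ u t) := by
        refine Finset.sum_congr rfl fun s _ => Finset.sum_congr rfl fun t _ => ?_
        rw [dotProduct, Finset.mul_sum]
        exact Finset.sum_congr rfl fun j _ => by ring

/-- Theorem 3.2 of the paper.  Under the stability condition
`‖u − v‖ ≤ C_S ‖G(u) − G(v)‖`, if `u_n = ∑_j β_j φ_j` with `‖β‖² ≤ C` and the Gram matrix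
of the `φ_j` has `ε`-rank `p`, and `F_p` contains all `p`-term sub-combinations of the
`φ_j`, then `√(L(u_n)) ≥ (1/C_S)(dist(u*, F_p) − √(C (p+1)(n−p)² ε))`, where
`L(u) = ‖G(u) − f‖²` and `G(u*) = f`. -/
theorem loss_lower_bound_of_eps_rank
    (d n p : ℕ) (hp1 : 1 ≤ p) (hpn : p ≤ n)
    (Ω : Set (EuclideanSpace ℝ (Fin d))) (hΩ : MeasurableSet Ω)
    (ε C CS : ℝ) (hε : 0 ≤ ε) (hC : 0 < C) (hCS : 0 < CS)
    (φ : Fin n → Lp ℝ 2 (volume.restrict Ω))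
    (M : Matrix (Fin n) (Fin n) ℝ)
    (hM : ∀ i j, M i j = ∫ x, (φ i : EuclideanSpace ℝ (Fin d) → ℝ) x *
      (φ j : EuclideanSpace ℝ (Fin d) → ℝ) x ∂(volume.restrict Ω))
    (hHerm : M.IsHermitian)
    (hrank : (Finset.univ.filter (fun i => ε < hHerm.eigenvalues i)).card = p)
    (β : Fin n → ℝ) (hβ : ∑ j, (β j) ^ 2 ≤ C)
    (un : Lp ℝ 2 (volume.restrict Ω)) (hun : un = ∑ j, β j • φ j)
    (G : Lp ℝ 2 (volume.restrict Ω) → Lp ℝ 2 (volume.restrict Ω))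
    (hstab : ∀ u v : Lp ℝ 2 (volume.restrict Ω), ‖u - v‖ ≤ CS * ‖G u - G v‖)
    (f uStar : Lp ℝ 2 (volume.restrict Ω)) (huStar : G uStar = f)
    (Fp : Set (Lp ℝ 2 (volume.restrict Ω)))
    (hFp : ∀ (J : Finset (Fin n)) (γ : Fin n → ℝ), J.card = p →
      (∑ j ∈ J, γ j • φ j) ∈ Fp) :
    Real.sqrt (‖G un - f‖ ^ 2) ≥
      (1 / CS) * (Metric.infDist uStar Fp -
        Real.sqrt (C * ((p : ℝ) + 1) * ((n : ℝ) - p) ^ 2 * ε)) := by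
  classical
  set E : ℝ := C * ((p : ℝ) + 1) * ((n : ℝ) - p) ^ 2 * ε with hE
  -- step 1: construct a good element of Fp
  obtain ⟨vJ, hvJmem, hvJ⟩ : ∃ v ∈ Fp, ‖un - v‖ ≤ Real.sqrt E := by
    set m : ℕ := n - p with hm
    set lam : Fin n → ℝ := hHerm.eigenvalues with hlam
    set K : Finset (Fin n) := (Finset.univ.filter (fun i => ε < lam i))ᶜ with hKdef
    have hKcard : K.card = m := by
      rw [hKdef, Finset.card_compl, hrank, Fintype.card_fin]
    set ι : Fin m → Fin n := fun t => ((K.orderIsoOfFin hKcard t : K) : Fin n) with hι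
    have hιinj : Function.Injective ι := by
      intro s t h
      exact (K.orderIsoOfFin hKcard).injective (Subtype.ext h)
    have hιK : ∀ t, ι t ∈ K := fun t => (K.orderIsoOfFin hKcard t).2
    have hlamle : ∀ t, lam (ι t) ≤ ε := by
      intro t
      have := hιK t
      rw [hKdef, Finset.mem_compl, Finset.mem_filter] at this
      push_neg at this
      exact this (Finset.mem_univ _)
    set u : Fin m → (Fin n → ℝ) := fun t => (⇑(hHerm.eigenvectorBasis (ι t)) : Fin n → ℝ)
      with hu
    have huli : LinearIndependent ℝ u := by
      have h1 : LinearIndependent ℝ (fun t => hHerm.eigenvectorBasis (ι t)) :=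
        hHerm.eigenvectorBasis.orthonormal.linearIndependent.comp ι hιinj
      exact h1.map' (WithLp.linearEquiv 2 ℝ (Fin n → ℝ)).toLinearMap (LinearEquiv.ker _)
    have hdot : ∀ s t, u s ⬝ᵥ u t = if s = t then (1:ℝ) else 0 := by
      intro s t
      have h := orthonormal_iff_ite.mp hHerm.eigenvectorBasis.orthonormal (ι s) (ι t)
      have h2 : (inner ℝ (hHerm.eigenvectorBasis (ι s)) (hHerm.eigenvectorBasis (ι t)) : ℝ)
          = u s ⬝ᵥ u t := by
        simp [PiLp.inner_apply, RCLike.inner_apply, dotProduct, hu]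
        exact Finset.sum_congr rfl fun x _ => mul_comm _ _
      rw [h2] at h
      rw [h]
      by_cases hst : s = t
      · simp [hst]
      · have : ι s ≠ ι t := fun hc => hst (hιinj hc)
        simp [hst, this]
    have heig : ∀ t, M *ᵥ u t = lam (ι t) • u t := fun t =>
      hHerm.mulVec_eigenvectorBasis (ι t)
    obtain ⟨T, a, hTcard, hTeq, hTle⟩ := row_selection u huli β
    set w : Fin n → ℝ := fun j => ∑ t, a t * u t j with hw
    set s0 : ℝ := ∑ k ∈ T, |β k| with hs0
    have hwle : ∀ j, |w j| ≤ s0 := hTle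
    have hwv : w = ∑ t, a t • u t := by
      funext j
      simp [hw, Finset.sum_apply, Pi.smul_apply, smul_eq_mul]
    have hMw : M *ᵥ w = ∑ t, (a t * lam (ι t)) • u t := by
      rw [hwv]
      have : M *ᵥ (∑ t, a t • u t) = ∑ t, a t • (M *ᵥ u t) := by
        rw [show (M *ᵥ ∑ t, a t • u t) = M.mulVecLin (∑ t, a t • u t) from rfl]
        rw [map_sum]
        simp [Matrix.mulVecLin_apply]
      rw [this]
      congr 1
      funext t
      rw [heig t, smul_smul]
    have hquad : w ⬝ᵥ (M *ᵥ w) = ∑ t, lam (ι t) * (a t)^2 := by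
      rw [hMw, hwv, dot_expand' a (fun t => a t * lam (ι t)) u]
      rw [Finset.sum_comm]
      refine Finset.sum_congr rfl fun t _ => ?_
      rw [Finset.sum_eq_single t]
      · rw [hdot t t]; simp; ring
      · intro s _ hst
        rw [hdot s t, if_neg hst, mul_zero]
      · intro h; exact absurd (Finset.mem_univ t) h
    have hww : w ⬝ᵥ w = ∑ t, (a t)^2 := by
      rw [hwv, dot_expand' a a u]
      rw [Finset.sum_comm]
      refine Finset.sum_congr rfl fun t _ => ?_
      rw [Finset.sum_eq_single t]
      · rw [hdot t t]; simp; ring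
      · intro s _ hst
        rw [hdot s t, if_neg hst, mul_zero]
      · intro h; exact absurd (Finset.mem_univ t) h
    -- the chain of bounds
    have hsum_a : ∑ t, (a t)^2 = ∑ j, (w j)^2 := by
      rw [← hww]
      simp [dotProduct, sq]
    have hs0sq : s0^2 ≤ (m : ℝ) * C := by
      have hcs := Finset.sum_mul_sq_le_sq_mul_sq T (fun _ => (1:ℝ)) (fun k => |β k|)
      simp only [one_mul, one_pow, sq_abs] at hcs
      have h1 : (∑ k ∈ T, |β k|)^2 ≤ (T.card : ℝ) * ∑ k ∈ T, (β k)^2 := by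
        simpa [Finset.sum_const, nsmul_eq_mul] using hcs
      have h2 : ∑ k ∈ T, (β k)^2 ≤ C := by
        refine le_trans (Finset.sum_le_sum_of_subset_of_nonneg (Finset.subset_univ T)
          (fun i _ _ => sq_nonneg _)) hβ
      calc s0^2 ≤ (T.card : ℝ) * ∑ k ∈ T, (β k)^2 := h1
        _ ≤ (T.card : ℝ) * C := by
            exact mul_le_mul_of_nonneg_left h2 (Nat.cast_nonneg _)
        _ = (m : ℝ) * C := by rw [hTcard]
    have hwj : ∑ j, (w j)^2 ≤ (n : ℝ) * s0^2 := by
      have : ∀ j ∈ Finset.univ, (w j)^2 ≤ s0^2 := by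
        intro j _
        have := hwle j
        calc (w j)^2 = |w j|^2 := (sq_abs _).symm
          _ ≤ s0^2 := by
              apply pow_le_pow_left₀ (abs_nonneg _) this
      calc ∑ j, (w j)^2 ≤ ∑ _j : Fin n, s0^2 := Finset.sum_le_sum this
        _ = (n : ℝ) * s0^2 := by simp [Finset.sum_const, nsmul_eq_mul]
    have hquadle : w ⬝ᵥ (M *ᵥ w) ≤ E := by
      have h1 : w ⬝ᵥ (M *ᵥ w) ≤ ε * ∑ t, (a t)^2 := by
        rw [hquad, Finset.mul_sum]
        refine Finset.sum_le_sum fun t _ => ?_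
        exact mul_le_mul_of_nonneg_right (hlamle t) (sq_nonneg _)
      have h2 : ε * (∑ t, (a t)^2) ≤ ε * ((n : ℝ) * ((m:ℝ) * C)) := by
        apply mul_le_mul_of_nonneg_left _ hε
        rw [hsum_a]
        calc ∑ j, (w j)^2 ≤ (n : ℝ) * s0^2 := hwj
          _ ≤ (n : ℝ) * ((m:ℝ) * C) := by
              exact mul_le_mul_of_nonneg_left hs0sq (Nat.cast_nonneg _)
      have h3 : ε * ((n : ℝ) * ((m:ℝ) * C)) ≤ E := by
        have hnat : n * m ≤ (p + 1) * (m * m) := by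
          rcases Nat.eq_zero_or_pos m with hm0 | hm0
          · simp [hm0]
          · have hn : n ≤ (p + 1) * m := by
              have : (p + 1) * m = p * m + m := by ring
              rw [this]
              have : p * 1 ≤ p * m := Nat.mul_le_mul_left p hm0
              omega
            calc n * m ≤ ((p+1) * m) * m := Nat.mul_le_mul_right m hn
              _ = (p+1) * (m * m) := by ring
        have hcast : ((n : ℝ) - p) = (m : ℝ) := by
          rw [hm, Nat.cast_sub hpn]
        rw [hE, hcast]
        have : (n : ℝ) * ((m:ℝ) * C) ≤ C * ((p:ℝ)+1) * (m:ℝ)^2 := by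
          have := hnat
          have hcc : ((n * m : ℕ) : ℝ) ≤ (((p+1) * (m*m) : ℕ) : ℝ) := Nat.cast_le.mpr this
          push_cast at hcc
          nlinarith [hC.le]
        nlinarith [hε, this]
      calc w ⬝ᵥ (M *ᵥ w) ≤ ε * ∑ t, (a t)^2 := h1
        _ ≤ ε * ((n : ℝ) * ((m:ℝ) * C)) := h2
        _ ≤ E := h3
    -- norm identity
    have hMinner : ∀ i j, (inner ℝ (φ i) (φ j) : ℝ) = M i j := by
      intro i j
      rw [hM i j, MeasureTheory.L2.inner_def]
      simp [RCLike.inner_apply]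
      exact MeasureTheory.integral_congr_ae (Filter.Eventually.of_forall fun x => mul_comm _ _)
    have hnorm : ‖∑ j, w j • φ j‖^2 = w ⬝ᵥ (M *ᵥ w) := by
      have h1 : (inner ℝ (∑ i, w i • φ i) (∑ j, w j • φ j) : ℝ)
          = ∑ i, ∑ j, w i * (w j * M i j) := by
        rw [sum_inner]
        refine Finset.sum_congr rfl fun i _ => ?_
        rw [inner_sum]
        refine Finset.sum_congr rfl fun j _ => ?_
        rw [real_inner_smul_left, real_inner_smul_right, hMinner i j]
      have h2 : w ⬝ᵥ (M *ᵥ w) = ∑ i, ∑ j, w i * (w j * M i j) := by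
        simp [dotProduct, Matrix.mulVec, Finset.mul_sum]
        refine Finset.sum_congr rfl fun i _ => Finset.sum_congr rfl fun j _ => by ring
      rw [← real_inner_self_eq_norm_sq, h1, h2]
    -- build the element
    have hJcard : Tᶜ.card = p := by
      rw [Finset.card_compl, hTcard, Fintype.card_fin, hm, Nat.sub_sub_self hpn]
    refine ⟨∑ j ∈ Tᶜ, (β j - w j) • φ j, hFp Tᶜ _ hJcard, ?_⟩
    have hsub : ∑ j ∈ Tᶜ, (β j - w j) • φ j = ∑ j, (β j - w j) • φ j := by
      refine Finset.sum_subset (Finset.subset_univ _) fun j _ hj => ?_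
      have hjT : j ∈ T := by simpa using hj
      rw [show β j - w j = 0 from by rw [← hTeq j hjT]; simp [hw], zero_smul]
    have hdiff : un - (∑ j ∈ Tᶜ, (β j - w j) • φ j) = ∑ j, w j • φ j := by
      rw [hsub, hun, ← Finset.sum_sub_distrib]
      refine Finset.sum_congr rfl fun j _ => ?_
      rw [← sub_smul]
      ring_nf
    rw [hdiff]
    have hsq : ‖∑ j, w j • φ j‖^2 ≤ E := by rw [hnorm]; exact hquadle
    calc ‖∑ j, w j • φ j‖ = Real.sqrt (‖∑ j, w j • φ j‖^2) :=
          (Real.sqrt_sq (norm_nonneg _)).symm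
      _ ≤ Real.sqrt E := Real.sqrt_le_sqrt hsq
  -- step 2: conclude
  rw [Real.sqrt_sq (norm_nonneg (G un - f))]
  have h1 : Metric.infDist uStar Fp ≤ ‖uStar - vJ‖ := by
    have := Metric.infDist_le_dist_of_mem (x := uStar) hvJmem
    rwa [dist_eq_norm] at this
  have h2 : ‖uStar - vJ‖ ≤ ‖uStar - un‖ + ‖un - vJ‖ := by
    have := norm_add_le (uStar - un) (un - vJ)
    rwa [sub_add_sub_cancel] at this
  have h3 : ‖uStar - un‖ ≤ CS * ‖G un - f‖ := by
    have := hstab un uStar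
    rw [huStar] at this
    rwa [norm_sub_rev] at this
  have h4 : Metric.infDist uStar Fp - Real.sqrt E ≤ CS * ‖G un - f‖ := by
    have := h1.trans (h2.trans (by linarith : ‖uStar - un‖ + ‖un - vJ‖ ≤
      CS * ‖G un - f‖ + Real.sqrt E))
    linarith
  rw [ge_iff_le, one_div, inv_mul_le_iff₀ hCS]
  linarith
end

section
/- Let Ω ⊆ ℝ^d be a measurable set, ε ≥ 0, C > 0. Let φ_1, …, φ_n ∈ L²(Ω) have Gram matrix M with ε-rank r_ε(M) = p for some 1 ≤ p ≤ n, and let u_n = Σ_{j=1}^n β_j φ_j with ‖β‖² ≤ C. Let f ∈ L²(Ω) and let F_p denote the set of all functions of the form Σ_{j∈J} γ_j φ_j with J ⊆ {1,…,n}, |J| = p, and γ_j ∈ ℝ. Then ‖u_n − f‖_{L²(Ω)} ≥ dist(f, F_p) − √(C (p+1)(n−p)² ε), where dist(u, A) = inf_{v ∈ A} ‖u − v‖_{L²(Ω)}. -/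
open MeasureTheory Matrix Finset

set_option maxHeartbeats 1000000


lemma exists_submatrix_det_ne_zero {p n : ℕ} (V : Matrix (Fin p) (Fin n) ℝ)
    (hV : V * Vᵀ = 1) : ∃ σ : Fin p → Fin n, (V.submatrix id σ).det ≠ 0 := by
  have hsurj : Function.Surjective V.mulVec := by
    intro y
    exact ⟨Vᵀ.mulVec y, by rw [Matrix.mulVec_mulVec, hV, Matrix.one_mulVec]⟩
  have hspan : Submodule.span ℝ (Set.range Vᵀ) = ⊤ := by
    rw [show Set.range Vᵀ = Set.range V.col from rfl, ← Matrix.range_mulVecLin]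
    exact LinearMap.range_eq_top.2 hsurj
  obtain ⟨b, hbsub, hbspan, hbind⟩ := exists_linearIndependent ℝ (Set.range Vᵀ)
  rw [hspan] at hbspan
  have hbasis : Module.Basis b ℝ (Fin p → ℝ) :=
    Module.Basis.mk hbind (by rw [Subtype.range_coe, hbspan])
  have hfin : b.Finite := hbind.setFinite
  haveI : Fintype b := hfin.fintype
  have hcard : Fintype.card b = p := by
    have := Module.finrank_eq_card_basis hbasis
    rw [Module.finrank_fintype_fun_eq_card, Fintype.card_fin] at this
    exact this.symm
  let e : Fin p ≃ b := (Fintype.equivFinOfCardEq hcard).symm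
  have hmem : ∀ i : Fin p, ((e i : Fin p → ℝ)) ∈ Set.range Vᵀ := fun i => hbsub (e i).2
  choose σ hσ using hmem
  refine ⟨σ, ?_⟩
  have hcols : LinearIndependent ℝ (fun j => (V.submatrix id σ)ᵀ j) := by
    have : (fun j => (V.submatrix id σ)ᵀ j) = fun j => ((e j : Fin p → ℝ)) := by
      funext j
      rw [← hσ j]
      ext i
      simp [Matrix.transpose_apply, Matrix.submatrix_apply]
    rw [this]
    exact hbind.comp e e.injective
  have := Matrix.linearIndependent_cols_iff_isUnit.1 hcols
  have hdet := (Matrix.isUnit_iff_isUnit_det _).1 this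
  exact isUnit_iff_ne_zero.1 hdet


lemma key_exists_delta {n p : ℕ} (hpn : p ≤ n) (C : ℝ) (hC : 0 ≤ C)
    (U : Matrix (Fin n) (Fin n) ℝ)
    (hU1 : ∀ i j, ∑ k, U k i * U k j = if i = j then 1 else 0)
    (S : Finset (Fin n)) (hS : S.card = p)
    (β : Fin n → ℝ) (hβ : ∑ j, β j ^ 2 ≤ C) :
    ∃ (J : Finset (Fin n)) (δ : Fin n → ℝ), J.card = p ∧ (∀ k, k ∉ J → δ k = β k) ∧
      (∀ i ∈ S, ∑ k, U k i * δ k = 0) ∧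
      ∑ k, δ k ^ 2 ≤ C * ((p : ℝ) + 1) * ((n : ℝ) - p) ^ 2 := by
  classical
  -- enumerate S
  set emb : Fin p → Fin n := fun i => ((S.orderIsoOfFin hS i : {x // x ∈ S}) : Fin n) with hemb
  have hembInj : Function.Injective emb := fun a b h =>
    (S.orderIsoOfFin hS).injective (Subtype.ext h)
  have hembSurj : ∀ i₀ ∈ S, ∃ i, emb i = i₀ := by
    intro i₀ h
    exact ⟨(S.orderIsoOfFin hS).symm ⟨i₀, h⟩,
      congrArg Subtype.val ((S.orderIsoOfFin hS).apply_symm_apply ⟨i₀, h⟩)⟩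
  set V : Matrix (Fin p) (Fin n) ℝ := Matrix.of fun i k => U k (emb i) with hV
  have hVVt : V * Vᵀ = 1 := by
    ext i i'
    simp only [Matrix.mul_apply, Matrix.transpose_apply, hV, Matrix.of_apply, Matrix.one_apply]
    rw [hU1 (emb i) (emb i')]
    by_cases h : i = i'
    · simp [h]
    · rw [if_neg (fun hc => h (hembInj hc)), if_neg h]
  obtain ⟨σ₁, hσ₁⟩ := exists_submatrix_det_ne_zero V hVVt
  obtain ⟨σ, -, hσmax⟩ := Finset.exists_max_image Finset.univ
    (fun τ : Fin p → Fin n => |(V.submatrix id τ).det|) ⟨σ₁, mem_univ _⟩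
  have hσmax' : ∀ τ : Fin p → Fin n, |(V.submatrix id τ).det| ≤ |(V.submatrix id σ).det| :=
    fun τ => hσmax τ (mem_univ _)
  have hdetpos : 0 < |(V.submatrix id σ).det| :=
    lt_of_lt_of_le (abs_pos.2 hσ₁) (hσmax' σ₁)
  have hdet : (V.submatrix id σ).det ≠ 0 := by
    intro h; rw [h] at hdetpos; simp at hdetpos
  have hσinj : Function.Injective σ := by
    intro a b hab
    by_contra hne
    apply hdet
    exact Matrix.det_zero_of_column_eq hne (fun k => by
      simp [Matrix.submatrix_apply, hab])
  set J : Finset (Fin n) := Finset.image σ Finset.univ with hJ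
  have hJcard : J.card = p := by
    rw [hJ, Finset.card_image_of_injective _ hσinj, Finset.card_univ, Fintype.card_fin]
  set A : Matrix (Fin p) (Fin p) ℝ := V.submatrix id σ with hA
  set bvec : Fin p → ℝ := fun i => - ∑ k ∈ Jᶜ, β k * V i k with hbvec
  set x : Fin p → ℝ := (A.det)⁻¹ • (Matrix.cramer A bvec) with hx
  have hAx : A *ᵥ x = bvec := by
    rw [hx, Matrix.mulVec_smul, Matrix.mulVec_cramer, smul_smul,
      inv_mul_cancel₀ hdet, one_smul]
  -- bound on x
  set T : ℝ := ∑ k ∈ Jᶜ, |β k| with hT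
  have hTnn : 0 ≤ T := Finset.sum_nonneg fun k _ => abs_nonneg _
  have hxbound : ∀ j, |x j| ≤ T := by
    intro j
    have hb' : bvec = ∑ k ∈ Jᶜ, (-β k) • (fun i => V i k) := by
      funext i
      simp only [hbvec, Finset.sum_apply, Pi.smul_apply, smul_eq_mul, neg_mul,
        ← Finset.sum_neg_distrib]
    have hcr : Matrix.cramer A bvec = ∑ k ∈ Jᶜ, (-β k) • Matrix.cramer A (fun i => V i k) := by
      rw [hb', map_sum]
      simp_rw [LinearMap.map_smul]
    have hupd : ∀ k, A.updateCol j (fun i => V i k)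
        = V.submatrix id (Function.update σ j k) := by
      intro k
      ext i j'
      by_cases h : j' = j
      · simp [h, Matrix.updateCol_apply, Matrix.submatrix_apply]
      · simp only [Matrix.updateCol_apply, Matrix.submatrix_apply, Function.update_apply,
          if_neg h, hA, id_eq]
    have hone : ∀ k, |Matrix.cramer A (fun i => V i k) j| ≤ |A.det| := by
      intro k
      rw [Matrix.cramer_apply, hupd k]
      exact hσmax' _
    have : |Matrix.cramer A bvec j| ≤ T * |A.det| := by
      rw [hcr]
      calc |(∑ k ∈ Jᶜ, (-β k) • Matrix.cramer A (fun i => V i k)) j|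
          = |∑ k ∈ Jᶜ, (-β k) * Matrix.cramer A (fun i => V i k) j| := by
            simp [Finset.sum_apply]
        _ ≤ ∑ k ∈ Jᶜ, |(-β k) * Matrix.cramer A (fun i => V i k) j| :=
            Finset.abs_sum_le_sum_abs _ _
        _ ≤ ∑ k ∈ Jᶜ, |β k| * |A.det| := by
            refine Finset.sum_le_sum fun k _ => ?_
            rw [abs_mul, abs_neg]
            exact mul_le_mul_of_nonneg_left (hone k) (abs_nonneg _)
        _ = T * |A.det| := by rw [hT, Finset.sum_mul]
    have hxj : |x j| = |A.det|⁻¹ * |Matrix.cramer A bvec j| := by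
      rw [hx]; simp [abs_mul, abs_inv]
    rw [hxj]
    calc |A.det|⁻¹ * |Matrix.cramer A bvec j| ≤ |A.det|⁻¹ * (T * |A.det|) := by
          exact mul_le_mul_of_nonneg_left this (by positivity)
      _ = T := by field_simp
  -- define δ
  set δ : Fin n → ℝ := fun k => (if k ∈ J then 0 else β k) + ∑ i, (if σ i = k then x i else 0)
    with hδ
  have hδout : ∀ k, k ∉ J → δ k = β k := by
    intro k hk
    rw [hδ]
    simp only [if_neg hk]
    have : ∀ i : Fin p, (if σ i = k then x i else 0) = 0 := by
      intro i
      rw [if_neg]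
      intro h
      exact hk (by rw [hJ, ← h]; exact Finset.mem_image_of_mem σ (mem_univ i))
    rw [Finset.sum_congr rfl (fun i _ => this i)]
    simp
  have hδσ : ∀ i, δ (σ i) = x i := by
    intro i
    have h1 : σ i ∈ J := by rw [hJ]; exact Finset.mem_image_of_mem σ (mem_univ i)
    show (if σ i ∈ J then 0 else β (σ i)) + (∑ i' : Fin p, if σ i' = σ i then x i' else 0) = x i
    rw [if_pos h1, Finset.sum_eq_single i (fun i' _ hne => if_neg (fun h => hne (hσinj h)))
      (fun h => absurd (mem_univ i) h), if_pos rfl, zero_add]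
  refine ⟨J, δ, hJcard, hδout, ?_, ?_⟩
  · -- orthogonality constraint
    intro i₀ hi₀
    obtain ⟨i, rfl⟩ := hembSurj i₀ hi₀
    have hVi : ∀ k, U k (emb i) = V i k := fun k => rfl
    simp_rw [hVi]
    have hsplit : ∀ k, V i k * δ k
        = (if k ∈ Jᶜ then V i k * β k else 0) + ∑ i', (if σ i' = k then V i k * x i' else 0) := by
      intro k
      rw [hδ]
      rw [mul_add, Finset.mul_sum]
      congr 1
      · by_cases h : k ∈ J
        · simp [h]
        · simp [h]
      · refine Finset.sum_congr rfl fun i' _ => ?_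
        by_cases h : σ i' = k <;> simp [h]
    rw [Finset.sum_congr rfl (fun k _ => hsplit k), Finset.sum_add_distrib]
    have h1 : ∑ k, (if k ∈ Jᶜ then V i k * β k else 0) = ∑ k ∈ Jᶜ, V i k * β k := by
      rw [Finset.sum_ite_mem, Finset.univ_inter]
    have h2 : ∑ k, ∑ i', (if σ i' = k then V i k * x i' else 0)
        = ∑ i', V i (σ i') * x i' := by
      rw [Finset.sum_comm]
      refine Finset.sum_congr rfl fun i' _ => ?_
      rw [Finset.sum_ite_eq univ (σ i') (fun k => V i k * x i'), if_pos (mem_univ _)]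
    have h3 : ∑ i', V i (σ i') * x i' = (A *ᵥ x) i := by
      rw [Matrix.mulVec, dotProduct]
      refine Finset.sum_congr rfl fun i' _ => ?_
      rfl
    rw [h1, h2, h3, hAx, hbvec]
    simp [mul_comm]
  · -- norm bound
    have hsum : ∑ k, δ k ^ 2 = ∑ k ∈ J, δ k ^ 2 + ∑ k ∈ Jᶜ, δ k ^ 2 :=
      (Finset.sum_add_sum_compl J _).symm
    have hJsum : ∑ k ∈ J, δ k ^ 2 = ∑ i, x i ^ 2 := by
      rw [hJ, Finset.sum_image (fun a _ b _ h => hσinj h)]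
      exact Finset.sum_congr rfl fun i _ => by rw [hδσ i]
    have hJcsum : ∑ k ∈ Jᶜ, δ k ^ 2 = ∑ k ∈ Jᶜ, β k ^ 2 :=
      Finset.sum_congr rfl fun k hk => by rw [hδout k (Finset.mem_compl.1 hk)]
    have hβc : ∑ k ∈ Jᶜ, β k ^ 2 ≤ C := by
      refine le_trans (Finset.sum_le_sum_of_subset_of_nonneg (Finset.subset_univ _)
        (fun k _ _ => sq_nonneg _)) hβ
    have hq : (Jᶜ.card : ℝ) = (n : ℝ) - p := by
      rw [Finset.card_compl, hJcard, Fintype.card_fin, Nat.cast_sub hpn]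
    have hT2 : T ^ 2 ≤ ((n : ℝ) - p) * C := by
      have := sq_sum_le_card_mul_sum_sq (s := Jᶜ) (f := fun k => |β k|)
      rw [← hT] at this
      have h4 : ∑ k ∈ Jᶜ, |β k| ^ 2 = ∑ k ∈ Jᶜ, β k ^ 2 := by
        exact Finset.sum_congr rfl fun k _ => sq_abs _
      rw [h4] at this
      calc T ^ 2 ≤ (Jᶜ.card : ℝ) * ∑ k ∈ Jᶜ, β k ^ 2 := this
        _ ≤ ((n : ℝ) - p) * C := by
            rw [hq]
            have hnp : (0:ℝ) ≤ (n : ℝ) - p := by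
              have : (p:ℝ) ≤ (n:ℝ) := Nat.cast_le.mpr hpn
              linarith
            exact mul_le_mul_of_nonneg_left hβc hnp
    have hxsum : ∑ i, x i ^ 2 ≤ (p : ℝ) * T ^ 2 := by
      calc ∑ i, x i ^ 2 ≤ ∑ _i : Fin p, T ^ 2 := by
            refine Finset.sum_le_sum fun i _ => ?_
            rw [← sq_abs]
            exact pow_le_pow_left₀ (abs_nonneg _) (hxbound i) 2
        _ = (p : ℝ) * T ^ 2 := by simp [mul_comm]
    rw [hsum, hJsum, hJcsum]
    rcases eq_or_lt_of_le hpn with heq | hlt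
    · -- p = n : Jᶜ empty
      have hJuniv : J = Finset.univ := Finset.eq_univ_of_card J (by rw [hJcard, heq, Fintype.card_fin])
      have hJc : Jᶜ = ∅ := by rw [hJuniv, Finset.compl_univ]
      have hT0 : T = 0 := by rw [hT, hJc]; simp
      have : ∑ i, x i ^ 2 ≤ 0 := by rw [hT0] at hxsum; simpa using hxsum
      have h0 : ∑ k ∈ Jᶜ, β k ^ 2 = 0 := by rw [hJc]; simp
      rw [h0]
      have hr : 0 ≤ C * ((p : ℝ) + 1) * ((n : ℝ) - p) ^ 2 := by positivity
      linarith
    · -- p < n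
      have hq1 : (1:ℝ) ≤ (n : ℝ) - p := by
        have : (p:ℝ) + 1 ≤ n := by exact_mod_cast Nat.succ_le_of_lt hlt
        linarith
      set q : ℝ := (n : ℝ) - p with hqdef
      have hbound : ∑ i, x i ^ 2 + ∑ k ∈ Jᶜ, β k ^ 2 ≤ (p : ℝ) * (q * C) + C := by
        have := le_trans hxsum (mul_le_mul_of_nonneg_left hT2 (Nat.cast_nonneg p))
        linarith
      have hfinal : (p : ℝ) * (q * C) + C ≤ C * ((p : ℝ) + 1) * q ^ 2 := by
        have h1 : (0:ℝ) ≤ q - 1 := by linarith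
        have h2 : 0 ≤ C * ((p:ℝ) * q) * (q - 1) :=
          mul_nonneg (by positivity) h1
        have h3 : 0 ≤ C * (q - 1) * (q + 1) :=
          mul_nonneg (mul_nonneg hC h1) (by linarith)
        have hid : C * ((p:ℝ) + 1) * q ^ 2 - ((p:ℝ) * (q * C) + C)
            = C * ((p:ℝ) * q) * (q - 1) + C * (q - 1) * (q + 1) := by ring
        linarith [h2, h3, hid]
      linarith


lemma norm_sum_smul_sq {E : Type*} [NormedAddCommGroup E] [InnerProductSpace ℝ E] {n : ℕ}
    (ψ : Fin n → E) (c : Fin n → ℝ) :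
    ‖∑ j, c j • ψ j‖ ^ 2 = ∑ i, ∑ j, c i * c j * (inner ℝ (ψ i) (ψ j) : ℝ) := by
  rw [← real_inner_self_eq_norm_sq, sum_inner]
  refine Finset.sum_congr rfl fun i _ => ?_
  rw [real_inner_smul_left, inner_sum, Finset.mul_sum]
  refine Finset.sum_congr rfl fun j _ => ?_
  rw [real_inner_smul_right]; ring

lemma sum_sq_mulvec {n : ℕ} (U : Matrix (Fin n) (Fin n) ℝ)
    (hU2 : ∀ k l, ∑ i, U k i * U l i = if k = l then 1 else 0) (δ : Fin n → ℝ) :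
    ∑ i, (∑ k, U k i * δ k) ^ 2 = ∑ k, δ k ^ 2 := by
  simp_rw [sq, Finset.sum_mul_sum]
  rw [Finset.sum_comm]
  calc ∑ k, ∑ i, ∑ l, (U k i * δ k) * (U l i * δ l)
      = ∑ k, ∑ l, ∑ i, (U k i * δ k) * (U l i * δ l) := by
        exact Finset.sum_congr rfl fun k _ => Finset.sum_comm
    _ = ∑ k, ∑ l, (δ k * δ l) * ∑ i, U k i * U l i := by
        refine Finset.sum_congr rfl fun k _ => Finset.sum_congr rfl fun l _ => ?_
        rw [Finset.mul_sum]
        exact Finset.sum_congr rfl fun i _ => by ring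
    _ = ∑ k, δ k * δ k := by
        refine Finset.sum_congr rfl fun k _ => ?_
        rw [Finset.sum_eq_single k (fun l _ hl => by rw [hU2 k l, if_neg (Ne.symm hl), mul_zero])
          (fun h => absurd (mem_univ k) h), hU2 k k, if_pos rfl, mul_one]

lemma quad_form_eig {n : ℕ} (M : Matrix (Fin n) (Fin n) ℝ) (hHerm : M.IsHermitian)
    (c : Fin n → ℝ) :
    c ⬝ᵥ (M *ᵥ c) = ∑ i, hHerm.eigenvalues i *
      (∑ k, (hHerm.eigenvectorUnitary : Matrix (Fin n) (Fin n) ℝ) k i * c k) ^ 2 := by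
  set U := (hHerm.eigenvectorUnitary : Matrix (Fin n) (Fin n) ℝ) with hU
  have hst : M = U * diagonal hHerm.eigenvalues * star U := by
    have := hHerm.spectral_theorem
    simpa [Function.comp] using this
  conv_lhs => rw [hst]
  rw [← Matrix.mulVec_mulVec, ← Matrix.mulVec_mulVec, Matrix.dotProduct_mulVec]
  have hw1 : c ᵥ* U = fun i => ∑ k, U k i * c k := by
    funext i
    rw [Matrix.vecMul, dotProduct]
    exact Finset.sum_congr rfl fun k _ => mul_comm _ _
  have hw2 : (star U) *ᵥ c = fun i => ∑ k, U k i * c k := by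
    funext i
    rw [Matrix.mulVec, dotProduct]
    refine Finset.sum_congr rfl fun k _ => ?_
    simp [Matrix.star_apply]
  rw [hw1, hw2]
  rw [dotProduct]
  refine Finset.sum_congr rfl fun i _ => ?_
  rw [Matrix.mulVec_diagonal]
  ring

/-- function-fitting specialization of the loss lower bound.
If `u_n = ∑_j β_j φ_j` with `‖β‖² ≤ C` and the Gram matrix of `φ_1, …, φ_n ∈ L²(Ω)` has
`ε`-rank `p`, then for `F_p` the set of all `p`-term sub-combinations of the `φ_j`,
`‖u_n − f‖ ≥ dist(f, F_p) − √(C (p+1)(n−p)² ε)`. -/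
theorem fitting_loss_lower_bound_of_eps_rank
    (d n p : ℕ) (hp1 : 1 ≤ p) (hpn : p ≤ n)
    (Ω : Set (EuclideanSpace ℝ (Fin d))) (hΩ : MeasurableSet Ω)
    (ε C : ℝ) (hε : 0 ≤ ε) (hC : 0 < C)
    (φ : Fin n → Lp ℝ 2 (volume.restrict Ω))
    (M : Matrix (Fin n) (Fin n) ℝ)
    (hM : ∀ i j, M i j = ∫ x, (φ i : EuclideanSpace ℝ (Fin d) → ℝ) x *
      (φ j : EuclideanSpace ℝ (Fin d) → ℝ) x ∂(volume.restrict Ω))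
    (hHerm : M.IsHermitian)
    (hrank : (Finset.univ.filter (fun i => ε < hHerm.eigenvalues i)).card = p)
    (β : Fin n → ℝ) (hβ : ∑ j, (β j) ^ 2 ≤ C)
    (un : Lp ℝ 2 (volume.restrict Ω)) (hun : un = ∑ j, β j • φ j)
    (f : Lp ℝ 2 (volume.restrict Ω))
    (Fp : Set (Lp ℝ 2 (volume.restrict Ω)))
    (hFp : Fp = {g | ∃ (J : Finset (Fin n)) (γ : Fin n → ℝ),
      J.card = p ∧ g = ∑ j ∈ J, γ j • φ j}) :
    ‖un - f‖ ≥ Metric.infDist f Fp -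
      Real.sqrt (C * ((p : ℝ) + 1) * ((n : ℝ) - p) ^ 2 * ε) := by
  classical
  set U := (hHerm.eigenvectorUnitary : Matrix (Fin n) (Fin n) ℝ) with hUdef
  have h1 : U * star U = 1 := Matrix.mem_unitaryGroup_iff.mp hHerm.eigenvectorUnitary.2
  have h2 : star U * U = 1 := Matrix.mem_unitaryGroup_iff'.mp hHerm.eigenvectorUnitary.2
  have hU1 : ∀ i j, ∑ k, U k i * U k j = if i = j then 1 else 0 := by
    intro i j
    have := congrFun (congrFun h2 i) j
    rw [Matrix.mul_apply] at this
    simpa [Matrix.star_apply, Matrix.one_apply] using this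
  have hU2 : ∀ k l, ∑ i, U k i * U l i = if k = l then 1 else 0 := by
    intro k l
    have := congrFun (congrFun h1 k) l
    rw [Matrix.mul_apply] at this
    simpa [Matrix.star_apply, Matrix.one_apply] using this
  set S := Finset.univ.filter (fun i => ε < hHerm.eigenvalues i) with hS
  obtain ⟨J, δ, hJcard, hδout, hδorth, hδsum⟩ :=
    key_exists_delta hpn C hC.le U hU1 S hrank β hβ
  -- the approximant
  set g : Lp ℝ 2 (volume.restrict Ω) := ∑ j ∈ J, (β j - δ j) • φ j with hg
  have hgFp : g ∈ Fp := by
    rw [hFp]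
    exact ⟨J, fun j => β j - δ j, hJcard, rfl⟩
  -- un - g = ∑ δ j • φ j
  have hung : un - g = ∑ j, δ j • φ j := by
    have hsub : ∑ j ∈ J, (β j - δ j) • φ j = ∑ j, (β j - δ j) • φ j := by
      refine Finset.sum_subset (Finset.subset_univ J) fun j _ hj => ?_
      rw [hδout j hj, sub_self, zero_smul]
    rw [hun, hg, hsub, ← Finset.sum_sub_distrib]
    refine Finset.sum_congr rfl fun j _ => ?_
    rw [← sub_smul]
    ring_nf
  -- inner products are Gram entries
  have hinner : ∀ i j, (inner ℝ (φ i) (φ j) : ℝ) = M i j := by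
    intro i j
    rw [hM i j, MeasureTheory.L2.inner_def]
    simp [RCLike.inner_apply, conj_trivial, mul_comm]
  -- norm squared of un - g
  have hnormsq : ‖un - g‖ ^ 2 = δ ⬝ᵥ (M *ᵥ δ) := by
    rw [hung, norm_sum_smul_sq]
    rw [dotProduct]
    refine Finset.sum_congr rfl fun i _ => ?_
    rw [Matrix.mulVec, dotProduct, Finset.mul_sum]
    refine Finset.sum_congr rfl fun j _ => ?_
    rw [hinner i j]
    ring
  -- spectral bound
  have hbound : ‖un - g‖ ^ 2 ≤ C * ((p : ℝ) + 1) * ((n : ℝ) - p) ^ 2 * ε := by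
    rw [hnormsq, quad_form_eig M hHerm δ]
    set w : Fin n → ℝ := fun i => ∑ k, U k i * δ k with hw
    have hw0 : ∀ i ∈ S, w i = 0 := fun i hi => hδorth i hi
    have hsplit : ∑ i, hHerm.eigenvalues i * w i ^ 2
        = ∑ i ∈ Sᶜ, hHerm.eigenvalues i * w i ^ 2 := by
      rw [← Finset.sum_add_sum_compl S]
      rw [Finset.sum_congr rfl (fun i hi => by rw [hw0 i hi, sq, mul_zero, mul_zero])]
      simp
    rw [hsplit]
    have hstep : ∑ i ∈ Sᶜ, hHerm.eigenvalues i * w i ^ 2 ≤ ε * ∑ i, w i ^ 2 := by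
      calc ∑ i ∈ Sᶜ, hHerm.eigenvalues i * w i ^ 2 ≤ ∑ i ∈ Sᶜ, ε * w i ^ 2 := by
            refine Finset.sum_le_sum fun i hi => ?_
            have : ¬ ε < hHerm.eigenvalues i := by
              rw [Finset.mem_compl, hS, Finset.mem_filter] at hi
              intro h
              exact hi ⟨mem_univ i, h⟩
            exact mul_le_mul_of_nonneg_right (not_lt.mp this) (sq_nonneg _)
        _ ≤ ∑ i, ε * w i ^ 2 := by
            refine Finset.sum_le_sum_of_subset_of_nonneg (Finset.subset_univ _)
              fun i _ _ => mul_nonneg hε (sq_nonneg _)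
        _ = ε * ∑ i, w i ^ 2 := by rw [Finset.mul_sum]
    have hwsum : ∑ i, w i ^ 2 = ∑ k, δ k ^ 2 := sum_sq_mulvec U hU2 δ
    calc ∑ i ∈ Sᶜ, hHerm.eigenvalues i * w i ^ 2 ≤ ε * ∑ i, w i ^ 2 := hstep
      _ = ε * ∑ k, δ k ^ 2 := by rw [hwsum]
      _ ≤ ε * (C * ((p : ℝ) + 1) * ((n : ℝ) - p) ^ 2) :=
          mul_le_mul_of_nonneg_left hδsum hε
      _ = C * ((p : ℝ) + 1) * ((n : ℝ) - p) ^ 2 * ε := by ring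
  -- conclude
  have hnorm : ‖un - g‖ ≤ Real.sqrt (C * ((p : ℝ) + 1) * ((n : ℝ) - p) ^ 2 * ε) := by
    rw [← Real.sqrt_sq (norm_nonneg (un - g))]
    exact Real.sqrt_le_sqrt hbound
  have hdist : Metric.infDist f Fp ≤ ‖f - g‖ := by
    rw [← dist_eq_norm]
    exact Metric.infDist_le_dist_of_mem hgFp
  have htri : ‖f - g‖ ≤ ‖f - un‖ + ‖un - g‖ := by
    calc ‖f - g‖ = ‖(f - un) + (un - g)‖ := by rw [sub_add_sub_cancel]
      _ ≤ ‖f - un‖ + ‖un - g‖ := norm_add_le _ _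
  have hrev : ‖f - un‖ = ‖un - f‖ := norm_sub_rev _ _
  linarith
end

section
/- Let γ ≠ 0 and let b_1, …, b_n ∈ ℝ be pairwise distinct. Then the functions φ_j(x) = tanh(γ (x − b_j)), j = 1, …, n, are linearly independent in L²([−1, 1]): if c_1, …, c_n ∈ ℝ satisfy Σ_{j=1}^n c_j tanh(γ(x − b_j)) = 0 for all x ∈ [−1, 1], then c_1 = … = c_n = 0. -/
private lemma tanh_formula (u : ℝ) :
    Real.tanh u = (Real.exp (2*u) - 1) / (Real.exp (2*u) + 1) := by
  rw [Real.tanh_eq_sinh_div_cosh, Real.sinh_eq, Real.cosh_eq]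
  have h1 : Real.exp u ≠ 0 := (Real.exp_pos u).ne'
  have h2 : Real.exp (2*u) = Real.exp u * Real.exp u := by
    rw [← Real.exp_add]; ring_nf
  have h3 : Real.exp (-u) = 1 / Real.exp u := by
    rw [Real.exp_neg]; field_simp
  have hpos : Real.exp (2*u) + 1 ≠ 0 := by positivity
  have hpos2 : Real.exp u + Real.exp (-u) ≠ 0 := by positivity
  rw [h3] at hpos2 ⊢
  rw [h2] at hpos ⊢
  field_simp

private lemma analyticAt_tanh (x : ℝ) : AnalyticAt ℝ Real.tanh x := by
  have hs : AnalyticAt ℝ Real.sinh x := by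
    have : Real.sinh = fun y : ℝ => (Real.exp y - Real.exp (-y)) / 2 :=
      funext Real.sinh_eq
    rw [this]
    exact ((analyticAt_rexp.comp analyticAt_id).sub
      (analyticAt_rexp.comp analyticAt_id.neg)).div analyticAt_const two_ne_zero
  have hcpos := Real.cosh_pos x
  have hch : AnalyticAt ℝ Real.cosh x := by
    have : Real.cosh = fun y : ℝ => (Real.exp y + Real.exp (-y)) / 2 :=
      funext Real.cosh_eq
    rw [this]
    exact ((analyticAt_rexp.comp analyticAt_id).add
      (analyticAt_rexp.comp analyticAt_id.neg)).div analyticAt_const two_ne_zero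
  have : Real.tanh = fun y : ℝ => Real.sinh y / Real.cosh y :=
    funext Real.tanh_eq_sinh_div_cosh
  rw [this]
  exact hs.div hch hcpos.ne'

/-- Let `γ ≠ 0` and `b_1, …, b_n ∈ ℝ` be pairwise distinct.  Then the
shifted tanh neurons `φ_j(x) = tanh(γ (x − b_j))` are linearly independent on `[−1, 1]`:
if `∑_j c_j tanh(γ(x − b_j)) = 0` for all `x ∈ [−1, 1]`, then all `c_j = 0`. -/
theorem tanh_shifted_neurons_linearIndependent
    (n : ℕ) (γ : ℝ) (hγ : γ ≠ 0) (b : Fin n → ℝ)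
    (hb : ∀ i j, i ≠ j → b i ≠ b j)
    (c : Fin n → ℝ)
    (hc : ∀ x ∈ Set.Icc (-1 : ℝ) 1, ∑ j, c j * Real.tanh (γ * (x - b j)) = 0) :
    ∀ j, c j = 0 := by
  -- Step 1: the sum vanishes on all of ℝ by analytic continuation.
  set g : ℝ → ℝ := fun x => ∑ j, c j * Real.tanh (γ * (x - b j)) with hg
  have hganal : AnalyticOnNhd ℝ g Set.univ := by
    intro x _
    apply Finset.analyticAt_fun_sum
    intro j _
    exact (analyticAt_const.mul
      ((analyticAt_tanh _).comp (analyticAt_const.mul (analyticAt_id.sub analyticAt_const))))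
  have hev : g =ᶠ[nhds (0:ℝ)] 0 := by
    have hmem : Set.Icc (-1:ℝ) 1 ∈ nhds (0:ℝ) :=
      Icc_mem_nhds (by norm_num) (by norm_num)
    filter_upwards [hmem] with x hx
    exact hc x hx
  have hall : ∀ x : ℝ, g x = 0 := by
    intro x
    exact hganal.eqOn_zero_of_preconnected_of_eventuallyEq_zero
      isPreconnected_univ (Set.mem_univ 0) hev (Set.mem_univ x)
  -- Step 2: substitute t = exp(2γx).
  set α : Fin n → ℝ := fun j => Real.exp (-(2*γ) * b j) with hα
  have hαpos : ∀ j, 0 < α j := fun j => Real.exp_pos _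
  have hαinj : ∀ i j, i ≠ j → α i ≠ α j := by
    intro i j hij h
    apply hb i j hij
    have h2 := Real.exp_injective h
    have h3 : (-(2*γ)) ≠ 0 := by simp [hγ]
    exact mul_left_cancel₀ h3 h2
  have key : ∀ t : ℝ, 0 < t → ∑ j, c j * ((t * α j - 1) / (t * α j + 1)) = 0 := by
    intro t ht
    have hx := hall (Real.log t / (2*γ))
    rw [hg] at hx
    rw [← hx]
    apply Finset.sum_congr rfl
    intro j _
    congr 1
    rw [tanh_formula]
    have : 2 * (γ * (Real.log t / (2*γ) - b j)) = Real.log t + (-(2*γ) * b j) := by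
      field_simp; ring
    rw [this, Real.exp_add, Real.exp_log ht]
  -- Step 3: clear denominators to get a vanishing polynomial.
  set P : Polynomial ℝ :=
    ∑ j, Polynomial.C (c j) * (Polynomial.C (α j) * Polynomial.X - 1) *
      ∏ i ∈ Finset.univ.erase j, (Polynomial.C (α i) * Polynomial.X + 1) with hP
  have hPeval : ∀ t : ℝ,
      P.eval t = ∑ j, c j * (α j * t - 1) * ∏ i ∈ Finset.univ.erase j, (α i * t + 1) := by
    intro t
    rw [hP]
    simp [Polynomial.eval_finset_sum, Polynomial.eval_prod]
  have hProots : ∀ t : ℝ, 0 < t → P.eval t = 0 := by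
    intro t ht
    rw [hPeval]
    have hne : ∀ i : Fin n, t * α i + 1 ≠ 0 := by
      intro i
      have := hαpos i
      positivity
    have expand : ∀ j : Fin n,
        c j * (α j * t - 1) * ∏ i ∈ Finset.univ.erase j, (α i * t + 1)
        = (c j * ((t * α j - 1) / (t * α j + 1))) * ∏ i, (α i * t + 1) := by
      intro j
      rw [← Finset.mul_prod_erase Finset.univ (fun i => α i * t + 1) (Finset.mem_univ j)]
      have h1 := hne j
      rw [mul_comm t (α j)] at h1 ⊢
      field_simp
    calc ∑ j, c j * (α j * t - 1) * ∏ i ∈ Finset.univ.erase j, (α i * t + 1)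
        = ∑ j, (c j * ((t * α j - 1) / (t * α j + 1))) * ∏ i, (α i * t + 1) := by
          exact Finset.sum_congr rfl (fun j _ => expand j)
      _ = (∑ j, c j * ((t * α j - 1) / (t * α j + 1))) * ∏ i, (α i * t + 1) := by
          rw [Finset.sum_mul]
      _ = 0 := by rw [key t ht, zero_mul]
  have hP0 : P = 0 := by
    apply Polynomial.eq_zero_of_infinite_isRoot
    apply Set.Infinite.mono (s := Set.Ioi (0:ℝ))
    · intro t ht
      exact hProots t ht
    · exact Set.Ioi_infinite 0
  -- Step 4: evaluate the zero polynomial at t = -1/α k.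
  intro k
  have hk := hPeval (-(1 / α k))
  rw [hP0, Polynomial.eval_zero] at hk
  have hsum : ∑ j, c j * (α j * (-(1 / α k)) - 1) *
      ∏ i ∈ Finset.univ.erase j, (α i * (-(1 / α k)) + 1)
      = c k * (α k * (-(1 / α k)) - 1) *
      ∏ i ∈ Finset.univ.erase k, (α i * (-(1 / α k)) + 1) := by
    apply Finset.sum_eq_single
    · intro j _ hjk
      have hkmem : k ∈ Finset.univ.erase j := Finset.mem_erase.mpr ⟨(Ne.symm hjk), Finset.mem_univ k⟩
      have : α k * (-(1 / α k)) + 1 = 0 := by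
        rw [mul_neg, mul_one_div_cancel (hαpos k).ne']; norm_num
      rw [Finset.prod_eq_zero hkmem this, mul_zero]
    · intro h; exact absurd (Finset.mem_univ k) h
  rw [hsum] at hk
  have hαk := (hαpos k).ne'
  have hfac : α k * (-(1 / α k)) - 1 = -2 := by field_simp; norm_num
  rw [hfac] at hk
  have hprodne : ∏ i ∈ Finset.univ.erase k, (α i * (-(1 / α k)) + 1) ≠ 0 := by
    rw [Finset.prod_ne_zero_iff]
    intro i hi
    have hik : i ≠ k := (Finset.mem_erase.mp hi).1
    have hne := hαinj i k hik
    have h : α i * (-(1 / α k)) + 1 = (α k - α i) / α k := by field_simp; ring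
    rw [h]
    exact div_ne_zero (sub_ne_zero.mpr (Ne.symm hne)) hαk
  rcases mul_eq_zero.mp hk.symm with h | h
  · rcases mul_eq_zero.mp h with h' | h'
    · exact h'
    · norm_num at h'
  · exact absurd h hprodne
end
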